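/- arXiv:1706.08170 — 7 statements merged into one kernel-verified Lean document; each statement's English description precedes it below -/
import Mathlib

section
/- A quasi-measure is continuous from below on open sets: if (U_λ) is an increasingly directed net of open sets with union U, then μ(U_λ) converges increasingly to μ(U). -/
open Set MeasureTheory BoundedContinuousFunction Filter Topology

/-- An *image* is a set that is either open or closed. -/
def IsImage {X : Type*} [TopologicalSpace X] (A : Set X) : Prop := IsOpen A ∨ IsClosed A

/-- A (normalized, additive, compact-regular) quasi-measure on the images of `X`. -/
structure IsQuasiMeasure {X : Type*} [TopologicalSpace X] (μ : Set X → ℝ) : Prop where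
  nonneg : ∀ A : Set X, IsImage A → 0 ≤ μ A
  normalized : μ Set.univ = 1
  additive : ∀ A B : Set X, IsImage A → IsImage B → IsImage (A ∪ B) → Disjoint A B →
    μ (A ∪ B) = μ A + μ B
  regular : ∀ U : Set X, IsOpen U →
    IsLUB {r : ℝ | ∃ K : Set X, IsCompact K ∧ K ⊆ U ∧ μ K = r} (μ U)

/-- A quasi-measure is simple if it only takes the values 0 and 1. -/
def IsSimpleQM {X : Type*} [TopologicalSpace X] (μ : Set X → ℝ) : Prop :=
  ∀ A : Set X, IsImage A → μ A = 0 ∨ μ A = 1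

/-- Membership in the singly generated algebra `A(c) = {φ ∘ c : φ ∈ C(ℝ,ℝ)}`. -/
def InAlg {X : Type*} [TopologicalSpace X] (c f : X →ᵇ ℝ) : Prop :=
  ∃ φ : C(ℝ, ℝ), ∀ x, f x = φ (c x)

-- The quasi-integral of `a` with respect to `μ`: `∫ t dμ_a(t)` where `μ_a`
-- is the Borel probability measure extending `μ ∘ a⁻¹` (if it exists).
open Classical in
noncomputable def qint {X : Type*} [TopologicalSpace X] (μ : Set X → ℝ) (a : X →ᵇ ℝ) : ℝ :=
  if h : ∃ ν : MeasureTheory.Measure ℝ, MeasureTheory.IsProbabilityMeasure ν ∧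
      ∀ A : Set ℝ, IsImage A → ν A = ENNReal.ofReal (μ (a ⁻¹' A))
  then ∫ t, t ∂ h.choose else 0

/-- An image-transformation from `X` to `Y`. -/
structure IsImageTransformation {X Y : Type*} [TopologicalSpace X] [TopologicalSpace Y]
    (q : Set X → Set Y) : Prop where
  image : ∀ A : Set X, IsImage A → IsImage (q A)
  top : q Set.univ = Set.univ
  openMap : ∀ U : Set X, IsOpen U → IsOpen (q U)
  additive : ∀ A B : Set X, IsImage A → IsImage B → IsImage (A ∪ B) → Disjoint A B →
    q (A ∪ B) = q A ∪ q B ∧ Disjoint (q A) (q B)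
  regular : ∀ U : Set X, IsOpen U → ∀ K : Set Y, IsCompact K → K ⊆ q U →
    ∃ L : Set X, IsCompact L ∧ L ⊆ U ∧ K ⊆ q L

lemma qm_compact_le {X : Type*} [TopologicalSpace X] {μ : Set X → ℝ} (hμ : IsQuasiMeasure μ)
    {K U : Set X} (hK : IsCompact K) (hU : IsOpen U) (hKU : K ⊆ U) : μ K ≤ μ U :=
  (hμ.regular U hU).1 ⟨K, hK, hKU, rfl⟩

lemma qm_mono_open {X : Type*} [TopologicalSpace X] {μ : Set X → ℝ} (hμ : IsQuasiMeasure μ)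
    {V W : Set X} (hV : IsOpen V) (hW : IsOpen W) (hVW : V ⊆ W) : μ V ≤ μ W := by
  refine (hμ.regular V hV).2 ?_
  rintro r ⟨K, hK, hKV, rfl⟩
  exact qm_compact_le hμ hK hW (hKV.trans hVW)

/-- continuity from below on open sets along increasingly directed nets. -/
theorem quasiMeasure_continuous_from_below {X : Type*} [TopologicalSpace X] [T2Space X]
    {ι : Type*} [Preorder ι] [IsDirected ι (· ≤ ·)] [Nonempty ι]
    (μ : Set X → ℝ) (hμ : IsQuasiMeasure μ)
    (U : ι → Set X) (hopen : ∀ i, IsOpen (U i)) (hmono : Monotone U) :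
    Monotone (fun i => μ (U i)) ∧
      Filter.Tendsto (fun i => μ (U i)) Filter.atTop (nhds (μ (⋃ i, U i))) := by
  have hUopen : IsOpen (⋃ i, U i) := isOpen_iUnion hopen
  have hmono' : Monotone fun i => μ (U i) := fun i j hij =>
    qm_mono_open hμ (hopen i) (hopen j) (hmono hij)
  refine ⟨hmono', ?_⟩
  have hle : ∀ i, μ (U i) ≤ μ (⋃ i, U i) := fun i =>
    qm_mono_open hμ (hopen i) hUopen (Set.subset_iUnion U i)
  refine tendsto_order.2 ⟨?_, ?_⟩
  · intro a ha
    obtain ⟨r, ⟨K, hK, hKU, rfl⟩, har⟩ := (hμ.regular _ hUopen).exists_between ha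
    obtain ⟨t, ht⟩ := hK.elim_finite_subcover U hopen hKU
    obtain ⟨i0, hi0⟩ : ∃ i0, ∀ j ∈ t, j ≤ i0 := t.exists_le
    have hKi : K ⊆ U i0 := ht.trans (Set.iUnion₂_subset fun j hj => hmono (hi0 j hj))
    refine (Filter.atTop_basis.eventually_iff).2 ⟨i0, trivial, fun j hj => ?_⟩
    exact lt_of_lt_of_le har.1 ((qm_compact_le hμ hK (hopen i0) hKi).trans
      (hmono' hj))
  · intro a ha
    exact Filter.Eventually.of_forall fun i => lt_of_le_of_lt (hle i) ha
end

section
/- Every quasi-measure μ on the real line ℝ is the restriction (to the family of sets that are open or closed) of a unique Borel probability measure on ℝ. -/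
open Set MeasureTheory BoundedContinuousFunction Filter Topology

namespace QM4

variable {μ : Set ℝ → ℝ}

theorem image_open {U : Set ℝ} (h : IsOpen U) : IsImage U := Or.inl h
theorem image_closed {C : Set ℝ} (h : IsClosed C) : IsImage C := Or.inr h

theorem image_compl {A : Set ℝ} (h : IsImage A) : IsImage Aᶜ :=
  h.elim (fun h => Or.inr h.isClosed_compl) (fun h => Or.inl h.isOpen_compl)

theorem qm_empty (hμ : IsQuasiMeasure μ) : μ ∅ = 0 := by
  have h := hμ.additive ∅ ∅ (image_open isOpen_empty) (image_open isOpen_empty)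
    (by rw [Set.union_empty]; exact image_open isOpen_empty) (disjoint_bot_left)
  rw [Set.union_empty] at h
  linarith

theorem qm_compl (hμ : IsQuasiMeasure μ) {A : Set ℝ} (hA : IsImage A) : μ A + μ Aᶜ = 1 := by
  have h := hμ.additive A Aᶜ hA (image_compl hA)
    (by rw [Set.union_compl_self]; exact image_open isOpen_univ) disjoint_compl_right
  rw [Set.union_compl_self, hμ.normalized] at h
  linarith

theorem cmpt_le (hμ : IsQuasiMeasure μ) {K U : Set ℝ} (hK : IsCompact K) (hU : IsOpen U)
    (h : K ⊆ U) : μ K ≤ μ U :=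
  (hμ.regular U hU).1 ⟨K, hK, h, rfl⟩

theorem mono_oo (hμ : IsQuasiMeasure μ) {U V : Set ℝ} (hU : IsOpen U) (hV : IsOpen V)
    (h : U ⊆ V) : μ U ≤ μ V := by
  refine (hμ.regular U hU).2 ?_
  rintro r ⟨K, hK, hKU, rfl⟩
  exact cmpt_le hμ hK hV (hKU.trans h)

theorem mono_co (hμ : IsQuasiMeasure μ) {C U : Set ℝ} (hC : IsClosed C) (hU : IsOpen U)
    (h : C ⊆ U) : μ C ≤ μ U := by
  have hd : IsOpen (U \ C) := hU.sdiff hC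
  have hadd := hμ.additive C (U \ C) (image_closed hC) (image_open hd)
    (by rw [Set.union_diff_cancel h]; exact image_open hU) Set.disjoint_sdiff_right
  rw [Set.union_diff_cancel h] at hadd
  have := hμ.nonneg _ (image_open hd)
  linarith

theorem mono_oc (hμ : IsQuasiMeasure μ) {U C : Set ℝ} (hU : IsOpen U) (hC : IsClosed C)
    (h : U ⊆ C) : μ U ≤ μ C := by
  have hd : IsClosed (C \ U) := hC.sdiff hU
  have hadd := hμ.additive U (C \ U) (image_open hU) (image_closed hd)
    (by rw [Set.union_diff_cancel h]; exact image_closed hC) Set.disjoint_sdiff_right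
  rw [Set.union_diff_cancel h] at hadd
  have := hμ.nonneg _ (image_closed hd)
  linarith

theorem mono_cc (hμ : IsQuasiMeasure μ) {C D : Set ℝ} (hC : IsClosed C) (hD : IsClosed D)
    (h : C ⊆ D) : μ C ≤ μ D := by
  have h1 := qm_compl hμ (image_closed hC)
  have h2 := qm_compl hμ (image_closed hD)
  have := mono_oo hμ hD.isOpen_compl hC.isOpen_compl (Set.compl_subset_compl.2 h)
  linarith

theorem qm_le_one (hμ : IsQuasiMeasure μ) {A : Set ℝ} (hA : IsImage A) : μ A ≤ 1 := by
  rcases hA with h | h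
  · have := mono_oc hμ h isClosed_univ (Set.subset_univ A)
    rwa [hμ.normalized] at this
  · have := mono_cc hμ h isClosed_univ (Set.subset_univ A)
    rwa [hμ.normalized] at this

/-- Key approximation: the measure of `Ioi x` can be approximated by `Ioi s` for `s > x`. -/
theorem exists_Ioi_approx (hμ : IsQuasiMeasure μ) (x : ℝ) {ε : ℝ} (hε : 0 < ε) :
    ∃ s, x < s ∧ μ (Set.Ioi x) - ε < μ (Set.Ioi s) := by
  obtain ⟨r, ⟨K, hK, hKx, rfl⟩, hr⟩ :=
    (hμ.regular _ isOpen_Ioi).exists_between (show μ (Set.Ioi x) - ε < μ (Set.Ioi x) by linarith)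
  rcases K.eq_empty_or_nonempty with rfl | hne
  · refine ⟨x + 1, by linarith, ?_⟩
    have h0 := hμ.nonneg (Set.Ioi (x + 1)) (image_open isOpen_Ioi)
    rw [qm_empty hμ] at hr
    linarith [hr.1]
  · have hm : sInf K ∈ K := hK.sInf_mem hne
    have hxm : x < sInf K := hKx hm
    refine ⟨(x + sInf K) / 2, by linarith, ?_⟩
    have hsub : K ⊆ Set.Ioi ((x + sInf K) / 2) := by
      intro k hk
      have : sInf K ≤ k := csInf_le hK.bddBelow hk
      simp only [Set.mem_Ioi]
      linarith
    have := cmpt_le hμ hK isOpen_Ioi hsub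
    linarith [hr.1]

theorem compl_Iic (x : ℝ) : (Set.Iic x)ᶜ = Set.Ioi x := Set.compl_Iic

theorem qm_Iic_Ioi (hμ : IsQuasiMeasure μ) (x : ℝ) : μ (Set.Iic x) + μ (Set.Ioi x) = 1 := by
  have := qm_compl hμ (image_closed isClosed_Iic (C := Set.Iic x))
  rwa [Set.compl_Iic] at this

/-- The cumulative distribution function of a quasi-measure, as a Stieltjes function. -/
noncomputable def qmF (μ : Set ℝ → ℝ) (hμ : IsQuasiMeasure μ) : StieltjesFunction ℝ where
  toFun := fun t => μ (Set.Iic t)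
  mono' := fun s t h => mono_cc hμ isClosed_Iic isClosed_Iic (Set.Iic_subset_Iic.2 h)
  right_continuous' := by
    intro x
    have hmono : Monotone fun t => μ (Set.Iic t) :=
      fun s t h => mono_cc hμ isClosed_Iic isClosed_Iic (Set.Iic_subset_Iic.2 h)
    rw [← continuousWithinAt_Ioi_iff_Ici]
    rw [hmono.continuousWithinAt_Ioi_iff_rightLim_eq]
    rw [hmono.rightLim_eq_sInf]
    refine le_antisymm ?_ (le_csInf ⟨μ (Set.Iic (x + 1)), ⟨x + 1, by simp, rfl⟩⟩ ?_)
    · refine le_of_forall_pos_le_add fun ε hε => ?_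
      obtain ⟨s, hxs, hs⟩ := exists_Ioi_approx hμ x hε
      have h1 := qm_Iic_Ioi hμ x
      have h2 := qm_Iic_Ioi hμ s
      have : μ (Set.Iic s) ≤ μ (Set.Iic x) + ε := by linarith
      exact le_trans (csInf_le ⟨μ (Set.Iic x), by
        rintro r ⟨t, ht, rfl⟩; exact hmono (le_of_lt ht)⟩ ⟨s, hxs, rfl⟩) this
    · rintro r ⟨t, ht, rfl⟩
      exact hmono (le_of_lt ht)

theorem qmF_apply (hμ : IsQuasiMeasure μ) (t : ℝ) : qmF μ hμ t = μ (Set.Iic t) := rfl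

theorem qmF_tendsto_atBot (hμ : IsQuasiMeasure μ) : Tendsto (qmF μ hμ) atBot (𝓝 0) := by
  have hbdd : BddBelow (Set.range (qmF μ hμ)) :=
    ⟨0, by rintro r ⟨t, rfl⟩; exact hμ.nonneg _ (image_closed isClosed_Iic)⟩
  have h := tendsto_atBot_ciInf (qmF μ hμ).mono hbdd
  convert h using 2
  refine le_antisymm (le_ciInf fun t => hμ.nonneg _ (image_closed isClosed_Iic)) ?_
  refine le_of_forall_pos_le_add fun ε hε => ?_
  obtain ⟨r, ⟨K, hK, -, rfl⟩, hr⟩ :=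
    (hμ.regular _ isOpen_univ).exists_between
      (show μ Set.univ - ε < μ Set.univ by linarith)
  rw [hμ.normalized] at hr
  rcases K.eq_empty_or_nonempty with rfl | hne
  · rw [qm_empty hμ] at hr
    calc ⨅ t, qmF μ hμ t ≤ qmF μ hμ 0 := ciInf_le hbdd 0
      _ ≤ 1 := qm_le_one hμ (image_closed isClosed_Iic)
      _ ≤ 0 + ε := by linarith [hr.1]
  · set t := sInf K - 1 with ht
    have hsub : K ⊆ Set.Ioi t := fun k hk => by
      have : sInf K ≤ k := csInf_le hK.bddBelow hk
      simp only [Set.mem_Ioi, ht]; linarith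
    have h1 := cmpt_le hμ hK isOpen_Ioi hsub
    have h2 := qm_Iic_Ioi hμ t
    calc ⨅ s, qmF μ hμ s ≤ qmF μ hμ t := ciInf_le hbdd t
      _ ≤ 0 + ε := by rw [qmF_apply]; linarith [hr.1]

theorem qmF_tendsto_atTop (hμ : IsQuasiMeasure μ) : Tendsto (qmF μ hμ) atTop (𝓝 1) := by
  have hbdd : BddAbove (Set.range (qmF μ hμ)) :=
    ⟨1, by rintro r ⟨t, rfl⟩; exact qm_le_one hμ (image_closed isClosed_Iic)⟩
  have h := tendsto_atTop_ciSup (qmF μ hμ).mono hbdd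
  convert h using 2
  refine le_antisymm ?_ (ciSup_le fun t => qm_le_one hμ (image_closed isClosed_Iic))
  refine le_of_forall_pos_le_add fun ε hε => ?_
  obtain ⟨r, ⟨K, hK, -, rfl⟩, hr⟩ :=
    (hμ.regular _ isOpen_univ).exists_between
      (show μ Set.univ - ε < μ Set.univ by linarith)
  rw [hμ.normalized] at hr
  rcases K.eq_empty_or_nonempty with rfl | hne
  · rw [qm_empty hμ] at hr
    have : (0:ℝ) ≤ qmF μ hμ 0 := hμ.nonneg _ (image_closed isClosed_Iic)
    calc (1:ℝ) ≤ 0 + ε := by linarith [hr.1]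
      _ ≤ qmF μ hμ 0 + ε := by linarith
      _ ≤ (⨆ t, qmF μ hμ t) + ε := by
          have := le_ciSup hbdd (0:ℝ) (f := fun t => qmF μ hμ t)
          linarith
  · set t := sSup K with ht
    have hsub : K ⊆ Set.Iic t := fun k hk => le_csSup hK.bddAbove hk
    have h1 := mono_cc hμ hK.isClosed isClosed_Iic hsub
    calc (1:ℝ) ≤ μ K + ε := by linarith [hr.1]
      _ ≤ qmF μ hμ t + ε := by rw [qmF_apply]; linarith
      _ ≤ (⨆ s, qmF μ hμ s) + ε := by
          have := le_ciSup hbdd t (f := fun s => qmF μ hμ s)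
          linarith

end QM4

namespace QM4

variable {μ : Set ℝ → ℝ}

theorem leftLim_qmF (hμ : IsQuasiMeasure μ) (b : ℝ) :
    Function.leftLim (qmF μ hμ) b = μ (Set.Iio b) := by
  rw [(qmF μ hμ).mono.leftLim_eq_sSup]
  refine IsLUB.csSup_eq ?_ ⟨qmF μ hμ (b - 1), ⟨b - 1, by simp, rfl⟩⟩
  constructor
  · rintro r ⟨s, hs, rfl⟩
    exact mono_co hμ isClosed_Iic isOpen_Iio fun y hy => Set.mem_Iio.2 (lt_of_le_of_lt hy hs)
  · intro c hc
    refine (hμ.regular _ isOpen_Iio).2 ?_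
    rintro r ⟨K, hK, hKb, rfl⟩
    rcases K.eq_empty_or_nonempty with rfl | hne
    · rw [qm_empty hμ]
      exact le_trans (hμ.nonneg _ (image_closed isClosed_Iic))
        (hc ⟨b - 1, by simp, rfl⟩)
    · have ht : sSup K ∈ K := hK.sSup_mem hne
      have htb : sSup K < b := hKb ht
      have hsub : K ⊆ Set.Iic (sSup K) := fun k hk => le_csSup hK.bddAbove hk
      exact le_trans (mono_cc hμ hK.isClosed isClosed_Iic hsub) (hc ⟨sSup K, htb, rfl⟩)

/-- The candidate Borel probability measure. -/
noncomputable def qmMeasure (μ : Set ℝ → ℝ) (hμ : IsQuasiMeasure μ) : Measure ℝ :=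
  (qmF μ hμ).measure

theorem qmMeasure_prob (hμ : IsQuasiMeasure μ) : IsProbabilityMeasure (qmMeasure μ hμ) := by
  constructor
  rw [qmMeasure, (qmF μ hμ).measure_univ (qmF_tendsto_atBot hμ) (qmF_tendsto_atTop hμ)]
  norm_num

theorem nu_Iic (hμ : IsQuasiMeasure μ) (x : ℝ) :
    qmMeasure μ hμ (Set.Iic x) = ENNReal.ofReal (μ (Set.Iic x)) := by
  rw [qmMeasure, (qmF μ hμ).measure_Iic (qmF_tendsto_atBot hμ)]
  norm_num [qmF_apply]

theorem nu_Ici (hμ : IsQuasiMeasure μ) (x : ℝ) :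
    qmMeasure μ hμ (Set.Ici x) = ENNReal.ofReal (μ (Set.Ici x)) := by
  rw [qmMeasure, (qmF μ hμ).measure_Ici (qmF_tendsto_atTop hμ), leftLim_qmF hμ]
  have h := qm_compl hμ (image_open isOpen_Iio (U := Set.Iio x))
  rw [Set.compl_Iio] at h
  congr 1
  linarith

theorem nu_compl_aux (hμ : IsQuasiMeasure μ) {A : Set ℝ} (hA : IsImage A)
    (hm : MeasurableSet A) (h : qmMeasure μ hμ A = ENNReal.ofReal (μ A)) :
    qmMeasure μ hμ Aᶜ = ENNReal.ofReal (μ Aᶜ) := by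
  haveI := qmMeasure_prob hμ
  have hcompl : μ Aᶜ = 1 - μ A := by linarith [qm_compl hμ hA]
  rw [prob_compl_eq_one_sub hm, h, hcompl,
    ENNReal.ofReal_sub 1 (hμ.nonneg A hA), ENNReal.ofReal_one]

theorem nu_Iio (hμ : IsQuasiMeasure μ) (x : ℝ) :
    qmMeasure μ hμ (Set.Iio x) = ENNReal.ofReal (μ (Set.Iio x)) := by
  have := nu_compl_aux hμ (image_closed isClosed_Ici) measurableSet_Ici (nu_Ici hμ x)
  rwa [Set.compl_Ici] at this

theorem nu_Ioi (hμ : IsQuasiMeasure μ) (x : ℝ) :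
    qmMeasure μ hμ (Set.Ioi x) = ENNReal.ofReal (μ (Set.Ioi x)) := by
  have := nu_compl_aux hμ (image_closed isClosed_Iic) measurableSet_Iic (nu_Iic hμ x)
  rwa [Set.compl_Iic] at this

theorem nu_Ioo (hμ : IsQuasiMeasure μ) (a b : ℝ) :
    qmMeasure μ hμ (Set.Ioo a b) = ENNReal.ofReal (μ (Set.Ioo a b)) := by
  rcases le_or_gt b a with h | h
  · rw [Set.Ioo_eq_empty (by exact fun h' => absurd h (not_le.2 h')), measure_empty,
      qm_empty hμ, ENNReal.ofReal_zero]
  · rw [qmMeasure, (qmF μ hμ).measure_Ioo, leftLim_qmF hμ, qmF_apply]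
    have hunion : Set.Iic a ∪ Set.Ioo a b = Set.Iio b := by
      ext y
      simp only [Set.mem_union, Set.mem_Iic, Set.mem_Ioo, Set.mem_Iio]
      constructor
      · rintro (hy | ⟨-, hy⟩)
        · linarith
        · exact hy
      · intro hy
        rcases le_or_gt y a with h' | h'
        · exact Or.inl h'
        · exact Or.inr ⟨h', hy⟩
    have hadd := hμ.additive (Set.Iic a) (Set.Ioo a b) (image_closed isClosed_Iic)
      (image_open isOpen_Ioo) (by rw [hunion]; exact image_open isOpen_Iio)
      (by rw [Set.disjoint_left]; rintro y hy ⟨hy1, -⟩; exact absurd hy (not_le.2 hy1))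
    rw [hunion] at hadd
    congr 1
    linarith

theorem nu_preconnected (hμ : IsQuasiMeasure μ) {V : Set ℝ} (hV : IsOpen V)
    (hc : IsPreconnected V) : qmMeasure μ hμ V = ENNReal.ofReal (μ V) := by
  have no_min : ∀ m : ℝ, m ∈ V → (∀ y ∈ V, m ≤ y) → False := by
    intro m hm hlb
    obtain ⟨δ, hδ, hball⟩ := Metric.isOpen_iff.1 hV m hm
    have hd : dist (m - δ / 2) m < δ := by
      rw [Real.dist_eq, show m - δ / 2 - m = -(δ / 2) by ring, abs_neg,
        abs_of_pos (by linarith)]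
      linarith
    linarith [hlb _ (hball hd)]
  have no_max : ∀ m : ℝ, m ∈ V → (∀ y ∈ V, y ≤ m) → False := by
    intro m hm hub
    obtain ⟨δ, hδ, hball⟩ := Metric.isOpen_iff.1 hV m hm
    have hd : dist (m + δ / 2) m < δ := by
      rw [Real.dist_eq, show m + δ / 2 - m = δ / 2 by ring, abs_of_pos (by linarith)]
      linarith
    linarith [hub _ (hball hd)]
  rcases V.eq_empty_or_nonempty with rfl | hne
  · rw [measure_empty, qm_empty hμ, ENNReal.ofReal_zero]
  rcases hc.mem_intervals with h | h | h | h | h | h | h | h | h | h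
  · exfalso
    have hab : sInf V ≤ sSup V := by
      rw [h] at hne; exact (Set.nonempty_Icc).1 hne
    exact no_min (sInf V) (h.symm.subset (Set.left_mem_Icc.2 hab))
      (fun y hy => (h.subset hy).1)
  · exfalso
    have hab : sInf V < sSup V := by
      rw [h] at hne; exact (Set.nonempty_Ico).1 hne
    exact no_min (sInf V) (h.symm.subset (Set.left_mem_Ico.2 hab))
      (fun y hy => (h.subset hy).1)
  · exfalso
    have hab : sInf V < sSup V := by
      rw [h] at hne; exact (Set.nonempty_Ioc).1 hne
    exact no_max (sSup V) (h.symm.subset (Set.right_mem_Ioc.2 hab))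
      (fun y hy => (h.subset hy).2)
  · rw [h]; exact nu_Ioo hμ _ _
  · exact absurd (h.symm.subset Set.self_mem_Ici)
      fun hmem => no_min (sInf V) hmem (fun y hy => h.subset hy)
  · rw [h]; exact nu_Ioi hμ _
  · exact absurd (h.symm.subset Set.self_mem_Iic)
      fun hmem => no_max (sSup V) hmem (fun y hy => h.subset hy)
  · rw [h]; exact nu_Iio hμ _
  · rw [h]
    haveI := qmMeasure_prob hμ
    rw [measure_univ, hμ.normalized, ENNReal.ofReal_one]
  · rw [h, measure_empty, qm_empty hμ, ENNReal.ofReal_zero]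

end QM4

namespace QM4

variable {μ : Set ℝ → ℝ}

/-- Cover a compact subset of an open set by finitely many connected components. -/
theorem exists_component_cover {U K : Set ℝ} (hU : IsOpen U) (hK : IsCompact K)
    (hKU : K ⊆ U) :
    ∃ s : Finset (Set ℝ), (∀ V ∈ s, IsOpen V) ∧ (∀ V ∈ s, IsPreconnected V) ∧
      (∀ V ∈ s, ∀ W ∈ s, V ≠ W → Disjoint V W) ∧ K ⊆ ⋃ V ∈ s, V ∧ (⋃ V ∈ s, V) ⊆ U := by
  classical
  obtain ⟨b, hbK, hbfin, hcov⟩ := hK.elim_finite_subcover_image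
    (b := K) (c := fun x => connectedComponentIn U x)
    (fun x _ => hU.connectedComponentIn)
    (fun x hx => Set.mem_biUnion hx (mem_connectedComponentIn (hKU hx)))
  refine ⟨hbfin.toFinset.image (fun x => connectedComponentIn U x), ?_, ?_, ?_, ?_, ?_⟩
  · intro V hV
    obtain ⟨x, -, rfl⟩ := Finset.mem_image.1 hV
    exact hU.connectedComponentIn
  · intro V hV
    obtain ⟨x, -, rfl⟩ := Finset.mem_image.1 hV
    exact isPreconnected_connectedComponentIn
  · intro V hV W hW hVW
    obtain ⟨x, -, rfl⟩ := Finset.mem_image.1 hV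
    obtain ⟨y, -, rfl⟩ := Finset.mem_image.1 hW
    by_contra hdis
    obtain ⟨z, hzx, hzy⟩ := Set.not_disjoint_iff.1 hdis
    have e1 : connectedComponentIn U x = connectedComponentIn U z := connectedComponentIn_eq hzx
    have e2 : connectedComponentIn U y = connectedComponentIn U z := connectedComponentIn_eq hzy
    exact hVW (e1.trans e2.symm)
  · intro y hy
    obtain ⟨x, hxb, hyx⟩ := Set.mem_iUnion₂.1 (hcov hy)
    exact Set.mem_biUnion (Finset.mem_image.2 ⟨x, hbfin.mem_toFinset.2 hxb, rfl⟩) hyx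
  · intro y hy
    obtain ⟨V, hV, hyV⟩ := Set.mem_iUnion₂.1 hy
    obtain ⟨x, -, rfl⟩ := Finset.mem_image.1 hV
    exact connectedComponentIn_subset U x hyV

theorem nu_finite_union (hμ : IsQuasiMeasure μ) (s : Finset (Set ℝ))
    (ho : ∀ V ∈ s, IsOpen V) (hc : ∀ V ∈ s, IsPreconnected V)
    (hd : ∀ V ∈ s, ∀ W ∈ s, V ≠ W → Disjoint V W) :
    qmMeasure μ hμ (⋃ V ∈ s, V) = ENNReal.ofReal (μ (⋃ V ∈ s, V)) := by
  classical
  induction s using Finset.induction_on with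
  | empty => simp [qm_empty hμ]
  | insert V s' hVs ih =>
    have hVopen : IsOpen V := ho V (Finset.mem_insert_self V s')
    have hs'open : ∀ W ∈ s', IsOpen W := fun W hW => ho W (Finset.mem_insert_of_mem hW)
    have hUopen : IsOpen (⋃ W ∈ s', W) := isOpen_biUnion hs'open
    have hdisj : Disjoint V (⋃ W ∈ s', W) := by
      rw [Set.disjoint_iUnion_right]
      intro W
      rw [Set.disjoint_iUnion_right]
      intro hW
      exact hd V (Finset.mem_insert_self V s') W (Finset.mem_insert_of_mem hW)
        (fun h => hVs (h ▸ hW))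
    have hrw : (⋃ W ∈ insert V s', W) = V ∪ ⋃ W ∈ s', W := by
      simp [Finset.set_biUnion_insert]
    rw [hrw, measure_union hdisj hUopen.measurableSet]
    rw [ih hs'open (fun W hW => hc W (Finset.mem_insert_of_mem hW))
      (fun W hW X hX h => hd W (Finset.mem_insert_of_mem hW) X (Finset.mem_insert_of_mem hX) h)]
    have hadd := hμ.additive V (⋃ W ∈ s', W) (image_open hVopen) (image_open hUopen)
      (image_open (hVopen.union hUopen)) hdisj
    rw [hadd, ENNReal.ofReal_add (hμ.nonneg V (image_open hVopen))
      (hμ.nonneg _ (image_open hUopen)),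
      nu_preconnected hμ hVopen (hc V (Finset.mem_insert_self V s'))]

theorem nu_open (hμ : IsQuasiMeasure μ) {U : Set ℝ} (hU : IsOpen U) :
    qmMeasure μ hμ U = ENNReal.ofReal (μ U) := by
  haveI := qmMeasure_prob hμ
  have keyle : ∀ K : Set ℝ, IsCompact K → K ⊆ U →
      qmMeasure μ hμ K ≤ ENNReal.ofReal (μ U) ∧ μ K ≤ (qmMeasure μ hμ U).toReal := by
    intro K hK hKU
    obtain ⟨s, ho, hc, hd, hKs, hsU⟩ := exists_component_cover hU hK hKU
    have h1 := nu_finite_union hμ s ho hc hd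
    have hopen : IsOpen (⋃ V ∈ s, V) := isOpen_biUnion ho
    constructor
    · calc qmMeasure μ hμ K ≤ qmMeasure μ hμ (⋃ V ∈ s, V) := measure_mono hKs
        _ = ENNReal.ofReal (μ (⋃ V ∈ s, V)) := h1
        _ ≤ ENNReal.ofReal (μ U) := ENNReal.ofReal_le_ofReal (mono_oo hμ hopen hU hsU)
    · calc μ K ≤ μ (⋃ V ∈ s, V) := mono_co hμ hK.isClosed hopen hKs
        _ = (ENNReal.ofReal (μ (⋃ V ∈ s, V))).toReal :=
          (ENNReal.toReal_ofReal (hμ.nonneg _ (image_open hopen))).symm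
        _ = (qmMeasure μ hμ (⋃ V ∈ s, V)).toReal := by rw [h1]
        _ ≤ (qmMeasure μ hμ U).toReal :=
          ENNReal.toReal_mono (measure_ne_top _ _) (measure_mono hsU)
  refine le_antisymm ?_ ?_
  · refine le_of_forall_lt fun r hr => ?_
    obtain ⟨K, hKU, hK, hrK⟩ := MeasureTheory.Measure.Regular.innerRegular hU r hr
    exact lt_of_lt_of_le hrK ((keyle K hK hKU).1)
  · have hub : μ U ≤ (qmMeasure μ hμ U).toReal := by
      refine (hμ.regular U hU).2 ?_
      rintro r ⟨K, hK, hKU, rfl⟩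
      exact (keyle K hK hKU).2
    calc ENNReal.ofReal (μ U) ≤ ENNReal.ofReal (qmMeasure μ hμ U).toReal :=
        ENNReal.ofReal_le_ofReal hub
      _ = qmMeasure μ hμ U := ENNReal.ofReal_toReal (measure_ne_top _ _)

theorem nu_image (hμ : IsQuasiMeasure μ) {A : Set ℝ} (hA : IsImage A) :
    qmMeasure μ hμ A = ENNReal.ofReal (μ A) := by
  rcases hA with h | h
  · exact nu_open hμ h
  · have := nu_compl_aux hμ (image_open h.isOpen_compl) h.isOpen_compl.measurableSet
      (nu_open hμ h.isOpen_compl)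
    rwa [compl_compl] at this
end QM4

/-- every quasi-measure on ℝ is the restriction of a unique Borel
probability measure. -/
theorem quasiMeasure_real_extends_to_borel (μ : Set ℝ → ℝ) (hμ : IsQuasiMeasure μ) :
    ∃! ν : MeasureTheory.Measure ℝ, MeasureTheory.IsProbabilityMeasure ν ∧
      ∀ A : Set ℝ, IsImage A → ν A = ENNReal.ofReal (μ A) := by
  refine ⟨QM4.qmMeasure μ hμ, ⟨QM4.qmMeasure_prob hμ, fun A hA => QM4.nu_image hμ hA⟩, ?_⟩
  rintro ν ⟨hprob, hν⟩
  haveI := hprob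
  refine MeasureTheory.Measure.ext_of_Iic ν (QM4.qmMeasure μ hμ) fun a => ?_
  rw [hν _ (Or.inr isClosed_Iic), QM4.nu_image hμ (Or.inr isClosed_Iic)]
end

section
/- (Staircase Lemma) Let X be a topological space and a, b ∈ C_b(X,ℝ) with a ≤ b. For each δ > 0 there exist n and decompositions a = a₁ + ⋯ + aₙ, b = b₁ + ⋯ + bₙ with each aᵢ in the closed unital algebra generated by a, each bᵢ in the closed unital algebra generated by b, each aᵢ and bᵢ in the closed unital algebra generated by aᵢ + bᵢ, and aᵢ ≤ bᵢ + δ/n for all i. -/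
open Set MeasureTheory BoundedContinuousFunction Filter Topology

lemma mid_tele (t : ℝ) {p q r : ℝ} (hpq : p ≤ q) (hqr : q ≤ r) :
    (min (max t p) q - p) + (min (max t q) r - q) = min (max t p) r - p := by
  rcases le_total t q with h | h
  · have h1 : max t p ≤ q := max_le h hpq
    rw [max_eq_right h, min_eq_left hqr, min_eq_left (h1.trans hqr), min_eq_left h1]; ring
  · rw [max_eq_left (hpq.trans h), max_eq_left h, min_eq_right h]; ring

lemma sum_trunc (t c ε : ℝ) (hε : 0 ≤ ε) (n : ℕ) :
    ∑ i ∈ Finset.range n, (min (max t (c + i*ε)) (c + (i+1)*ε) - (c + i*ε))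
      = min (max t c) (c + n*ε) - c := by
  induction n with
  | zero => simp [min_eq_right (le_max_right t c)]
  | succ n ih =>
      rw [Finset.sum_range_succ, ih]
      have h1 : c ≤ c + (n:ℝ)*ε := le_add_of_nonneg_right (by positivity)
      have h2 : c + (n:ℝ)*ε ≤ c + ((n:ℝ)+1)*ε := by nlinarith
      push_cast
      linarith [mid_tele t h1 h2]

lemma Lshape {A B ε : ℝ} (hA0 : 0 ≤ A) (hAε : A ≤ ε) (hB0 : 0 ≤ B) (hBε : B ≤ ε)
    (h : A = 0 ∨ B = ε) : A = max (A + B - ε) 0 ∧ B = min (A + B) ε := by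
  rcases h with h | h <;> subst h
  · exact ⟨(max_eq_right (by linarith)).symm, by rw [zero_add, min_eq_left hBε]⟩
  · exact ⟨by rw [add_sub_cancel_right, max_eq_left hA0], (min_eq_right (by linarith)).symm⟩


/-- the Staircase Lemma. -/
theorem staircase_lemma {X : Type*} [TopologicalSpace X] (a b : X →ᵇ ℝ) (hab : a ≤ b)
    (δ : ℝ) (hδ : 0 < δ) :
    ∃ (n : ℕ), 0 < n ∧ ∃ (as bs : Fin n → (X →ᵇ ℝ)),
      a = ∑ i, as i ∧ b = ∑ i, bs i ∧
      ∀ i, InAlg a (as i) ∧ InAlg b (bs i) ∧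
        InAlg (as i + bs i) (as i) ∧ InAlg (as i + bs i) (bs i) ∧
        as i ≤ bs i + BoundedContinuousFunction.const X (δ / n) := by
  have hab' : ∀ x, a x ≤ b x := fun x => hab x
  set M : ℝ := ‖a‖ + ‖b‖ + 1 with hMdef
  have hM : 0 < M := by positivity
  have haM : ∀ x, -M ≤ a x ∧ a x ≤ M := by
    intro x
    have h := a.norm_coe_le_norm x
    rw [Real.norm_eq_abs, abs_le] at h
    have := norm_nonneg b
    exact ⟨by linarith [h.1], by linarith [h.2]⟩
  have hbM : ∀ x, -M ≤ b x ∧ b x ≤ M := by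
    intro x
    have h := b.norm_coe_le_norm x
    rw [Real.norm_eq_abs, abs_le] at h
    have := norm_nonneg a
    exact ⟨by linarith [h.1], by linarith [h.2]⟩
  set n : ℕ := ⌈2*M/δ⌉₊ + 1 with hndef
  have hn : 0 < n := Nat.succ_pos _
  have hnR : (0:ℝ) < n := by exact_mod_cast hn
  set t0 : ℝ := -M - δ with ht0def
  have hnδ : M ≤ t0 + n*δ := by
    have hceil : 2*M/δ ≤ (⌈2*M/δ⌉₊ : ℝ) := Nat.le_ceil _
    have h2 : 2*M/δ*δ = 2*M := div_mul_cancel₀ _ hδ.ne'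
    rw [hndef, ht0def]
    push_cast
    nlinarith
  set as : Fin n → (X →ᵇ ℝ) := fun i =>
    (a ⊔ const X (t0 + ((i:ℕ):ℝ)*δ + δ)) ⊓ const X (t0 + ((i:ℕ):ℝ)*δ + δ + δ)
      - const X (t0 + ((i:ℕ):ℝ)*δ + δ) + const X ((t0+δ)/n) with hasdef
  set bs : Fin n → (X →ᵇ ℝ) := fun i =>
    (b ⊔ const X (t0 + ((i:ℕ):ℝ)*δ)) ⊓ const X (t0 + ((i:ℕ):ℝ)*δ + δ)
      - const X (t0 + ((i:ℕ):ℝ)*δ) + const X (t0/n) with hbsdef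
  have evalA : ∀ (i : Fin n) (x : X), as i x =
      min (max (a x) (t0 + ((i:ℕ):ℝ)*δ + δ)) (t0 + ((i:ℕ):ℝ)*δ + δ + δ)
        - (t0 + ((i:ℕ):ℝ)*δ + δ) + (t0+δ)/n := by
    intro i x; simp [hasdef]
  have evalB : ∀ (i : Fin n) (x : X), bs i x =
      min (max (b x) (t0 + ((i:ℕ):ℝ)*δ)) (t0 + ((i:ℕ):ℝ)*δ + δ)
        - (t0 + ((i:ℕ):ℝ)*δ) + t0/n := by
    intro i x; simp [hbsdef]
  refine ⟨n, hn, as, bs, ?_, ?_, ?_⟩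
  · -- a = ∑ as i
    ext x
    have h1 : (∑ i, as i) x = ∑ i, as i x := by simp
    rw [h1]
    have h2 : ∑ i : Fin n, as i x
        = ∑ i : Fin n, ((fun j : ℕ =>
            (min (max (a x) ((t0+δ) + (j:ℝ)*δ)) ((t0+δ) + ((j:ℝ)+1)*δ) - ((t0+δ) + (j:ℝ)*δ))
              + (t0+δ)/n) (i:ℕ)) := by
      refine Finset.sum_congr rfl (fun i _ => ?_)
      have e1 : t0 + ((i:ℕ):ℝ)*δ + δ = (t0+δ) + ((i:ℕ):ℝ)*δ := by ring
      have e2 : t0 + ((i:ℕ):ℝ)*δ + δ + δ = (t0+δ) + (((i:ℕ):ℝ)+1)*δ := by ring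
      rw [evalA, e2, e1]
    rw [h2, Fin.sum_univ_eq_sum_range (fun j : ℕ =>
          (min (max (a x) ((t0+δ) + (j:ℝ)*δ)) ((t0+δ) + ((j:ℝ)+1)*δ) - ((t0+δ) + (j:ℝ)*δ))
            + (t0+δ)/n) n,
      Finset.sum_add_distrib, Finset.sum_const, Finset.card_range,
      sum_trunc _ _ _ hδ.le, nsmul_eq_mul, mul_div_cancel₀ _ hnR.ne']
    have l1 : t0 + δ ≤ a x := by have := (haM x).1; rw [ht0def]; linarith
    have l2 : a x ≤ (t0+δ) + n*δ := by linarith [(haM x).2, hnδ, hδ]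
    rw [max_eq_left l1, min_eq_left l2]
    ring
  · -- b = ∑ bs i
    ext x
    have h1 : (∑ i, bs i) x = ∑ i, bs i x := by simp
    rw [h1]
    have h2 : ∑ i : Fin n, bs i x
        = ∑ i : Fin n, ((fun j : ℕ =>
            (min (max (b x) (t0 + (j:ℝ)*δ)) (t0 + ((j:ℝ)+1)*δ) - (t0 + (j:ℝ)*δ))
              + t0/n) (i:ℕ)) := by
      refine Finset.sum_congr rfl (fun i _ => ?_)
      have e2 : t0 + ((i:ℕ):ℝ)*δ + δ = t0 + (((i:ℕ):ℝ)+1)*δ := by ring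
      rw [evalB, e2]
    rw [h2, Fin.sum_univ_eq_sum_range (fun j : ℕ =>
          (min (max (b x) (t0 + (j:ℝ)*δ)) (t0 + ((j:ℝ)+1)*δ) - (t0 + (j:ℝ)*δ))
            + t0/n) n,
      Finset.sum_add_distrib, Finset.sum_const, Finset.card_range,
      sum_trunc _ _ _ hδ.le, nsmul_eq_mul, mul_div_cancel₀ _ hnR.ne']
    have l1 : t0 ≤ b x := by have := (hbM x).1; rw [ht0def]; linarith
    have l2 : b x ≤ t0 + n*δ := by linarith [(hbM x).2, hnδ]
    rw [max_eq_left l1, min_eq_left l2]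
    ring
  · intro i
    set r : ℝ := t0 + ((i:ℕ):ℝ)*δ with hrdef
    have evalA' : ∀ x : X, as i x =
        min (max (a x) (r + δ)) (r + δ + δ) - (r + δ) + (t0+δ)/n := by
      intro x; rw [hrdef]; exact evalA i x
    have evalB' : ∀ x : X, bs i x =
        min (max (b x) r) (r + δ) - r + t0/n := by
      intro x; rw [hrdef]; exact evalB i x
    have key : ∀ x : X,
        (0 ≤ min (max (a x) (r + δ)) (r + δ + δ) - (r + δ)) ∧
        (min (max (a x) (r + δ)) (r + δ + δ) - (r + δ) ≤ δ) ∧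
        (0 ≤ min (max (b x) r) (r + δ) - r) ∧
        (min (max (b x) r) (r + δ) - r ≤ δ) ∧
        (min (max (a x) (r + δ)) (r + δ + δ) - (r + δ) = 0 ∨
          min (max (b x) r) (r + δ) - r = δ) := by
      intro x
      refine ⟨?_, ?_, ?_, ?_, ?_⟩
      · have : r + δ ≤ min (max (a x) (r+δ)) (r+δ+δ) :=
          le_min (le_max_right _ _) (by linarith)
        linarith
      · linarith [min_le_right (max (a x) (r+δ)) (r+δ+δ)]
      · have : r ≤ min (max (b x) r) (r+δ) := le_min (le_max_right _ _) (by linarith)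
        linarith
      · linarith [min_le_right (max (b x) r) (r+δ)]
      · rcases le_total (a x) (r + δ) with h | h
        · left
          rw [max_eq_right h, min_eq_left (by linarith)]
          ring
        · right
          have hb : r + δ ≤ b x := h.trans (hab' x)
          rw [max_eq_left (by linarith), min_eq_right hb]
          ring
    refine ⟨?_, ?_, ?_, ?_, ?_⟩
    · exact ⟨⟨fun t => min (max t (r + δ)) (r + δ + δ) - (r + δ) + (t0+δ)/n, by fun_prop⟩,
        fun x => by rw [evalA' x]; rfl⟩
    · exact ⟨⟨fun t => min (max t r) (r + δ) - r + t0/n, by fun_prop⟩,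
        fun x => by rw [evalB' x]; rfl⟩
    · refine ⟨⟨fun s => max (s - (t0+δ)/n - t0/n - δ) 0 + (t0+δ)/n, by fun_prop⟩, fun x => ?_⟩
      obtain ⟨hA0, hAδ, hB0, hBδ, hor⟩ := key x
      obtain ⟨hmax, -⟩ := Lshape hA0 hAδ hB0 hBδ hor
      have hsum : (as i + bs i) x = as i x + bs i x := by simp
      simp only [ContinuousMap.coe_mk]
      rw [hsum, evalA' x, evalB' x]
      have e : min (max (a x) (r+δ)) (r+δ+δ) - (r+δ) + (t0+δ)/n
          + (min (max (b x) r) (r+δ) - r + t0/n) - (t0+δ)/n - t0/n - δ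
          = min (max (a x) (r+δ)) (r+δ+δ) - (r+δ) + (min (max (b x) r) (r+δ) - r) - δ := by
        ring
      rw [e, ← hmax]
    · refine ⟨⟨fun s => min (s - (t0+δ)/n - t0/n) δ + t0/n, by fun_prop⟩, fun x => ?_⟩
      obtain ⟨hA0, hAδ, hB0, hBδ, hor⟩ := key x
      obtain ⟨-, hmin⟩ := Lshape hA0 hAδ hB0 hBδ hor
      have hsum : (as i + bs i) x = as i x + bs i x := by simp
      simp only [ContinuousMap.coe_mk]
      rw [hsum, evalA' x, evalB' x]
      have e : min (max (a x) (r+δ)) (r+δ+δ) - (r+δ) + (t0+δ)/n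
          + (min (max (b x) r) (r+δ) - r + t0/n) - (t0+δ)/n - t0/n
          = min (max (a x) (r+δ)) (r+δ+δ) - (r+δ) + (min (max (b x) r) (r+δ) - r) := by
        ring
      rw [e, ← hmin]
    · intro x
      show as i x ≤ (bs i + BoundedContinuousFunction.const X (δ/(n:ℝ))) x
      obtain ⟨hA0, hAδ, hB0, hBδ, hor⟩ := key x
      have hAB : min (max (a x) (r+δ)) (r+δ+δ) - (r+δ) ≤ min (max (b x) r) (r+δ) - r := by
        rcases hor with h | h <;> linarith
      have hrhs : (bs i + BoundedContinuousFunction.const X (δ/(n:ℝ))) x = bs i x + δ/n := by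
        simp
      rw [hrhs, evalA' x, evalB' x]
      have hdiv : (t0+δ)/n = t0/n + δ/n := add_div t0 δ n
      linarith
end

section
/- If ρ : C_b(X) → ℝ is positive (a ≥ 0 implies ρ(a) ≥ 0) and quasi-linear (linear on each singly generated algebra A(a)), then ρ is monotone: a ≤ b implies ρ(a) ≤ ρ(b); and ρ is Lipschitz: |ρ(a) − ρ(b)| ≤ ρ(1_X)·‖a − b‖∞. -/
open Set MeasureTheory BoundedContinuousFunction Filter Topology

section Aux

variable {X : Type*} [TopologicalSpace X]

/-- `min` with a constant, as a bounded continuous function. -/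
noncomputable def QLmin (a : X →ᵇ ℝ) (s : ℝ) : X →ᵇ ℝ :=
  BoundedContinuousFunction.comp (fun t : ℝ => min t s)
    (LipschitzWith.id.min (LipschitzWith.const s)) a

@[simp] lemma QLmin_apply (a : X →ᵇ ℝ) (s : ℝ) (x : X) : QLmin a s x = min (a x) s := rfl

lemma inAlg_self (a : X →ᵇ ℝ) : InAlg a a := ⟨ContinuousMap.id ℝ, fun _ => rfl⟩

lemma inAlg_one (a : X →ᵇ ℝ) : InAlg a 1 := ⟨ContinuousMap.const ℝ 1, fun _ => rfl⟩

lemma inAlg_QLmin (a : X →ᵇ ℝ) (s : ℝ) : InAlg a (QLmin a s) :=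
  ⟨⟨fun t => min t s, by fun_prop⟩, fun _ => rfl⟩

lemma inAlg_u (a : X →ᵇ ℝ) (δ s : ℝ) :
    InAlg a (δ⁻¹ • (QLmin a (s + δ) - QLmin a s)) :=
  ⟨⟨fun t => δ⁻¹ * (min t (s + δ) - min t s), by fun_prop⟩, fun x => by simp⟩

variable (ρ : (X →ᵇ ℝ) → ℝ)
    (hpos : ∀ a : X →ᵇ ℝ, 0 ≤ a → 0 ≤ ρ a)
    (hql : ∀ a f g : X →ᵇ ℝ, InAlg a f → InAlg a g → ∀ s t : ℝ,
      ρ (s • f + t • g) = s * ρ f + t * ρ g)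

include hql in
lemma ql_sub {c f g : X →ᵇ ℝ} (hf : InAlg c f) (hg : InAlg c g) :
    ρ (f - g) = ρ f - ρ g := by
  have h := hql c f g hf hg 1 (-1)
  have e : (1 : ℝ) • f + (-1 : ℝ) • g = f - g := by module
  rw [e] at h; linarith

include hql in
lemma ql_smul {c f : X →ᵇ ℝ} (hf : InAlg c f) (s : ℝ) : ρ (s • f) = s * ρ f := by
  have h := hql c f f hf hf s 0
  have e : s • f + (0 : ℝ) • f = s • f := by module
  rw [e] at h; linarith

include hpos hql in
lemma ql_mono_alg {c f g : X →ᵇ ℝ} (hf : InAlg c f) (hg : InAlg c g) (hfg : f ≤ g) :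
    ρ f ≤ ρ g := by
  have h := ql_sub ρ hql hg hf
  have h2 : 0 ≤ ρ (g - f) := hpos _ (by intro x; simpa using hfg x)
  linarith

include hpos hql in
/-- Key cross-algebra comparison: if `0 ≤ u ≤ 1`, `0 ≤ v ≤ 1` and `u` vanishes wherever
`v < 1`, then `u` and `v` both belong to the singly generated algebra of `u + v - 1`,
so `ρ u ≤ ρ v`. -/
lemma ql_key {u v : X →ᵇ ℝ}
    (hu0 : ∀ x, 0 ≤ u x) (hv0 : ∀ x, 0 ≤ v x) (hv1 : ∀ x, v x ≤ 1)
    (huv : ∀ x, v x < 1 → u x = 0) (hu1 : ∀ x, u x ≤ 1) : ρ u ≤ ρ v := by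
  set c : X →ᵇ ℝ := u + v - 1 with hc
  have hcx : ∀ x, c x = u x + v x - 1 := fun x => by simp [hc]
  have hu : InAlg c u := by
    refine ⟨⟨fun t => max t 0, by fun_prop⟩, fun x => ?_⟩
    simp only [ContinuousMap.coe_mk, hcx]
    rcases lt_or_eq_of_le (hv1 x) with h | h
    · rw [huv x h]; rw [max_eq_right] <;> linarith [hv0 x]
    · rw [h]; rw [max_eq_left] <;> simp [hu0 x]
  have hv : InAlg c v := by
    refine ⟨⟨fun t => 1 + min t 0, by fun_prop⟩, fun x => ?_⟩
    simp only [ContinuousMap.coe_mk, hcx]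
    rcases lt_or_eq_of_le (hv1 x) with h | h
    · rw [huv x h]; rw [min_eq_left] <;> linarith
    · rw [← h, min_eq_right] <;> linarith [hu0 x, hu1 x]
  refine ql_mono_alg ρ hpos hql hu hv ?_
  intro x
  show u x ≤ v x
  rcases lt_or_eq_of_le (hv1 x) with h | h
  · rw [huv x h]; exact hv0 x
  · rw [h]; exact hu1 x

end Aux

/-- a positive quasi-linear functional is monotone and Lipschitz. -/
theorem quasiLinear_monotone_lipschitz {X : Type*} [TopologicalSpace X]
    (ρ : (X →ᵇ ℝ) → ℝ)
    (hpos : ∀ a : X →ᵇ ℝ, 0 ≤ a → 0 ≤ ρ a)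
    (hql : ∀ a f g : X →ᵇ ℝ, InAlg a f → InAlg a g → ∀ s t : ℝ,
      ρ (s • f + t • g) = s * ρ f + t * ρ g) :
    (∀ a b : X →ᵇ ℝ, a ≤ b → ρ a ≤ ρ b) ∧
      ∀ a b : X →ᵇ ℝ, |ρ a - ρ b| ≤ ρ 1 * ‖a - b‖ := by
  have hρ1 : 0 ≤ ρ 1 := hpos 1 (by intro x; simp)
  have hsmul1 : ∀ s : ℝ, ρ (s • (1 : X →ᵇ ℝ)) = s * ρ 1 :=
    fun s => ql_smul ρ hql (inAlg_self 1) s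
  have hzero : ρ 0 = 0 := by
    have := ql_smul ρ hql (inAlg_self (1 : X →ᵇ ℝ)) 0
    simpa using this
  have hshift : ∀ (f : X →ᵇ ℝ) (s : ℝ), ρ (f + s • 1) = ρ f + s * ρ 1 := by
    intro f s
    have h := hql f f 1 (inAlg_self f) (inAlg_one f) 1 s
    have e : (1 : ℝ) • f + s • (1 : X →ᵇ ℝ) = f + s • 1 := by module
    rw [e] at h; linarith
  -- core monotonicity for nonnegative functions
  have hcore : ∀ a b : X →ᵇ ℝ, (∀ x, 0 ≤ a x) → a ≤ b → ρ a ≤ ρ b := by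
    intro a b ha hab
    have hb : ∀ x, 0 ≤ b x := fun x => le_trans (ha x) (hab x)
    refine le_of_forall_pos_le_add ?_
    intro ε hε
    set δ : ℝ := ε / (2 * ρ 1 + 1) with hδdef
    have hδ : 0 < δ := by positivity
    -- the induction claim
    have main : ∀ k : ℕ, ρ (QLmin a (k * δ)) ≤ ρ (QLmin b (k * δ - 2 * δ)) + 2 * δ * ρ 1 := by
      intro k
      induction k with
      | zero =>
        have e1 : QLmin a (((0 : ℕ) : ℝ) * δ) = 0 := by
          ext x; simp [min_eq_right (ha x)]
        have e2 : QLmin b (((0 : ℕ) : ℝ) * δ - 2 * δ) = (-(2 * δ)) • 1 := by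
          ext x; simp only [QLmin_apply, Nat.cast_zero, zero_mul, zero_sub]
          rw [min_eq_right (by linarith [hb x])]
          simp
        rw [e1, e2, hzero, hsmul1]; ring_nf; rfl
      | succ k ih =>
        set u : X →ᵇ ℝ := δ⁻¹ • (QLmin a (k * δ + δ) - QLmin a (k * δ)) with hudef
        set v : X →ᵇ ℝ := δ⁻¹ • (QLmin b ((k * δ - 2 * δ) + δ) - QLmin b (k * δ - 2 * δ)) with hvdef
        have hux : ∀ x, u x = δ⁻¹ * (min (a x) (k * δ + δ) - min (a x) (k * δ)) := by
          intro x; simp [hudef]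
        have hvx : ∀ x, v x = δ⁻¹ * (min (b x) ((k * δ - 2 * δ) + δ) - min (b x) (k * δ - 2 * δ)) := by
          intro x; simp [hvdef]
        -- pointwise bounds
        have key_facts : ∀ (t s : ℝ), 0 ≤ min t (s + δ) - min t s ∧ min t (s + δ) - min t s ≤ δ := by
          intro t s
          constructor
          · have : min t s ≤ min t (s + δ) := min_le_min le_rfl (by linarith)
            linarith
          · rcases le_total t s with h | h
            · rw [min_eq_left h, min_eq_left (by linarith)]; linarith
            · rw [min_eq_right h]
              have : t - s ≤ δ ∨ s + δ ≤ t := by rcases le_total t (s + δ) with h' | h'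
                                                 · left; linarith
                                                 · right; linarith
              rcases le_total t (s + δ) with h' | h'
              · rw [min_eq_left h']; linarith
              · rw [min_eq_right h']; linarith
        have hu0 : ∀ x, 0 ≤ u x := by
          intro x; rw [hux x]
          exact mul_nonneg (by positivity) (key_facts (a x) (k * δ)).1
        have hu1 : ∀ x, u x ≤ 1 := by
          intro x; rw [hux x, inv_mul_le_iff₀ hδ, mul_one]
          exact (key_facts (a x) (k * δ)).2
        have hv0 : ∀ x, 0 ≤ v x := by
          intro x; rw [hvx x]
          exact mul_nonneg (by positivity) (key_facts (b x) (k * δ - 2 * δ)).1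
        have hv1 : ∀ x, v x ≤ 1 := by
          intro x; rw [hvx x, inv_mul_le_iff₀ hδ, mul_one]
          exact (key_facts (b x) (k * δ - 2 * δ)).2
        have huv : ∀ x, v x < 1 → u x = 0 := by
          intro x hvlt
          rw [hvx x, inv_mul_lt_iff₀ hδ, mul_one] at hvlt
          -- v x < 1 means b x < (k-1)δ
          have hbx : b x < k * δ - 2 * δ + δ := by
            by_contra hcon
            push_neg at hcon
            rw [min_eq_right (by linarith), min_eq_right (by linarith)] at hvlt
            linarith
          have haxb : a x ≤ b x := hab x
          have hax : a x < k * δ := by linarith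
          rw [hux x, min_eq_left (by linarith), min_eq_left hax.le]
          simp
        have hρuv : ρ u ≤ ρ v := ql_key ρ hpos hql hu0 hv0 hv1 huv hu1
        -- relate ρ u, ρ v to telescoping differences
        have hu_eq : ρ (QLmin a (k * δ + δ)) - ρ (QLmin a (k * δ)) = δ * ρ u := by
          have h1 : ρ (QLmin a (k * δ + δ) - QLmin a (k * δ))
              = ρ (QLmin a (k * δ + δ)) - ρ (QLmin a (k * δ)) :=
            ql_sub ρ hql (inAlg_QLmin a _) (inAlg_QLmin a _)
          have h2 : ρ (δ • u) = δ * ρ u := ql_smul ρ hql (inAlg_u a δ (k * δ)) δ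
          have h3 : δ • u = QLmin a (k * δ + δ) - QLmin a (k * δ) := by
            rw [hudef, smul_smul, mul_inv_cancel₀ hδ.ne', one_smul]
          rw [h3] at h2; linarith
        have hv_eq : ρ (QLmin b ((k * δ - 2 * δ) + δ)) - ρ (QLmin b (k * δ - 2 * δ)) = δ * ρ v := by
          have h1 : ρ (QLmin b ((k * δ - 2 * δ) + δ) - QLmin b (k * δ - 2 * δ))
              = ρ (QLmin b ((k * δ - 2 * δ) + δ)) - ρ (QLmin b (k * δ - 2 * δ)) :=
            ql_sub ρ hql (inAlg_QLmin b _) (inAlg_QLmin b _)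
          have h2 : ρ (δ • v) = δ * ρ v := ql_smul ρ hql (inAlg_u b δ (k * δ - 2 * δ)) δ
          have h3 : δ • v = QLmin b ((k * δ - 2 * δ) + δ) - QLmin b (k * δ - 2 * δ) := by
            rw [hvdef, smul_smul, mul_inv_cancel₀ hδ.ne', one_smul]
          rw [h3] at h2; linarith
        have hcast : ((k + 1 : ℕ) : ℝ) * δ = k * δ + δ := by push_cast; ring
        have hcast2 : ((k + 1 : ℕ) : ℝ) * δ - 2 * δ = (k * δ - 2 * δ) + δ := by push_cast; ring
        rw [hcast2, hcast]
        have := mul_le_mul_of_nonneg_left hρuv hδ.le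
        linarith
    -- choose N with ‖a‖ ≤ N δ
    obtain ⟨N, hN⟩ := exists_nat_ge (‖a‖ / δ)
    have hNδ : ‖a‖ ≤ N * δ := by
      rw [div_le_iff₀ hδ] at hN; linarith
    have ea : QLmin a (N * δ) = a := by
      ext x
      exact min_eq_left (le_trans (le_trans (le_abs_self _) (a.norm_coe_le_norm x)) hNδ)
    have eb : ρ (QLmin b (N * δ - 2 * δ)) ≤ ρ b :=
      ql_mono_alg ρ hpos hql (inAlg_QLmin b _) (inAlg_self b)
        (fun x => by simp [min_le_left])
    have h2δ : 2 * δ * ρ 1 < ε := by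
      have hq : (0:ℝ) < 2 * ρ 1 + 1 := by linarith
      have hδε : δ * (2 * ρ 1 + 1) = ε := by rw [hδdef]; field_simp
      nlinarith
    have := main N
    rw [ea] at this
    linarith
  -- general monotonicity
  have hmono : ∀ a b : X →ᵇ ℝ, a ≤ b → ρ a ≤ ρ b := by
    intro a b hab
    have h1 : ρ (a + ‖a‖ • 1) = ρ a + ‖a‖ * ρ 1 := hshift a ‖a‖
    have h2 : ρ (b + ‖a‖ • 1) = ρ b + ‖a‖ * ρ 1 := hshift b ‖a‖
    have h3 : ρ (a + ‖a‖ • 1) ≤ ρ (b + ‖a‖ • 1) := by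
      apply hcore
      · intro x
        have h4 : |a x| ≤ ‖a‖ := by
          simpa [Real.norm_eq_abs] using a.norm_coe_le_norm x
        have h5 := neg_abs_le (a x)
        simp only [BoundedContinuousFunction.coe_add, BoundedContinuousFunction.coe_smul,
          Pi.add_apply, Pi.smul_apply, BoundedContinuousFunction.coe_one, Pi.one_apply,
          smul_eq_mul, mul_one]
        linarith
      · intro x
        have h : a x ≤ b x := hab x
        show (a + ‖a‖ • 1) x ≤ (b + ‖a‖ • 1) x
        simp only [BoundedContinuousFunction.coe_add, Pi.add_apply]
        linarith
    linarith
  refine ⟨hmono, ?_⟩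
  intro a b
  have key : ∀ f g : X →ᵇ ℝ, ρ f - ρ g ≤ ρ 1 * ‖f - g‖ := by
    intro f g
    have h1 : f ≤ g + ‖f - g‖ • 1 := by
      intro x
      have h2 : |f x - g x| ≤ ‖f - g‖ := by
        simpa [Real.norm_eq_abs] using (f - g).norm_coe_le_norm x
      have h3 := (abs_le.mp h2).1
      have h4 := (abs_le.mp h2).2
      show f x ≤ (g + ‖f - g‖ • 1) x
      simp only [BoundedContinuousFunction.coe_add, BoundedContinuousFunction.coe_smul,
        Pi.add_apply, Pi.smul_apply, BoundedContinuousFunction.coe_one, Pi.one_apply,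
        smul_eq_mul, mul_one]
      linarith
    have := hmono f (g + ‖f - g‖ • 1) h1
    rw [hshift g ‖f - g‖] at this
    linarith [mul_comm (ρ 1) ‖f - g‖]
  have k1 := key a b
  have k2 := key b a
  rw [norm_sub_rev b a] at k2
  rw [abs_sub_le_iff]
  exact ⟨k1, k2⟩
end

section
/- If σ is a simple quasi-measure on a Hausdorff space X (σ takes only the values 0 and 1) and a ∈ C_b(X), then the induced Borel measure σ_a on ℝ is the Dirac measure δ_{σ(a)} concentrated at the quasi-integral σ(a), and consequently σ(φ ∘ a) = φ(σ(a)) for every continuous φ : ℝ → ℝ; in particular the quasi-integral of a simple quasi-measure is multiplicative on each singly generated algebra A(a). -/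
open Set MeasureTheory BoundedContinuousFunction Filter Topology

/-- A probability measure giving full mass to a singleton is the Dirac measure there. -/
lemma prob_eq_dirac_of_singleton {ν : MeasureTheory.Measure ℝ}
    [MeasureTheory.IsProbabilityMeasure ν] {c : ℝ} (h : ν {c} = 1) :
    ν = MeasureTheory.Measure.dirac c := by
  ext s hs
  rw [MeasureTheory.Measure.dirac_apply' c hs]
  by_cases hc : c ∈ s
  · have h2 : (1 : ENNReal) ≤ ν s := h ▸ measure_mono (singleton_subset_iff.2 hc)
    have h1 : ν s ≤ 1 := prob_le_one
    simp [Set.indicator, hc, le_antisymm h1 h2]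
  · have hcompl : ν {c}ᶜ = 0 := by
      rw [measure_compl (measurableSet_singleton c) (measure_ne_top ν _), h, measure_univ]
      simp
    have : ν s ≤ ν {c}ᶜ := measure_mono (fun x hx => by
      simp only [mem_compl_iff, mem_singleton_iff]
      rintro rfl; exact hc hx)
    simp [Set.indicator, hc, le_antisymm (this.trans_eq hcompl) zero_le]

/-- for a simple quasi-measure, `σ_a` is the Dirac measure at `σ(a)` and
`σ(φ ∘ a) = φ(σ(a))`; in particular the quasi-integral is multiplicative on `A(a)`. -/
theorem simple_quasiMeasure_dirac {X : Type*} [TopologicalSpace X] [T2Space X]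
    (σ : Set X → ℝ) (hσ : IsQuasiMeasure σ) (hsimple : IsSimpleQM σ)
    (a : X →ᵇ ℝ) (νa : MeasureTheory.Measure ℝ)
    (hνa : MeasureTheory.IsProbabilityMeasure νa)
    (ha : ∀ A : Set ℝ, IsImage A → νa A = ENNReal.ofReal (σ (a ⁻¹' A))) :
    νa = MeasureTheory.Measure.dirac (∫ t, t ∂νa) ∧
      ∀ (φ : C(ℝ, ℝ)) (b : X →ᵇ ℝ), (∀ x, b x = φ (a x)) →
        ∀ νb : MeasureTheory.Measure ℝ, MeasureTheory.IsProbabilityMeasure νb →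
          (∀ A : Set ℝ, IsImage A → νb A = ENNReal.ofReal (σ (b ⁻¹' A))) →
          ∫ t, t ∂νb = φ (∫ t, t ∂νa) := by
  haveI := hνa
  -- σ of the empty set is 0
  have hempty : σ (∅ : Set X) = 0 := by
    have := hσ.additive ∅ ∅ (Or.inl isOpen_empty) (Or.inl isOpen_empty)
      (by rw [Set.union_empty]; exact Or.inl isOpen_empty) (by simp)
    simp only [Set.union_empty] at this
    linarith
  -- νa takes only the values 0 and 1 on images
  have h01 : ∀ A : Set ℝ, IsImage A → νa A = 0 ∨ νa A = 1 := by
    intro A hA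
    have hA' : IsImage (a ⁻¹' A) :=
      hA.elim (fun h => Or.inl (h.preimage a.continuous))
        (fun h => Or.inr (h.preimage a.continuous))
    rcases hsimple _ hA' with h | h
    · left; rw [ha A hA, h]; simp
    · right; rw [ha A hA, h]; simp
  set S : Set ℝ := {t : ℝ | νa (Iic t) = 1} with hS
  have hup : ∀ s ∈ S, ∀ t, s ≤ t → t ∈ S := by
    intro s hs t hst
    have hmono : νa (Iic s) ≤ νa (Iic t) := measure_mono (Iic_subset_Iic.2 hst)
    have hs' : νa (Iic s) = 1 := hs
    rcases h01 (Iic t) (Or.inr isClosed_Iic) with h | h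
    · rw [hs', h] at hmono
      exact absurd hmono (by simp)
    · exact h
  have hSne : ‖a‖ ∈ S := by
    have hpre : a ⁻¹' (Iic ‖a‖) = Set.univ := by
      ext x
      simp only [mem_preimage, mem_Iic, mem_univ, iff_true]
      have := a.norm_coe_le_norm x
      rw [Real.norm_eq_abs] at this
      exact (abs_le.1 this).2
    show νa (Iic ‖a‖) = 1
    rw [ha _ (Or.inr isClosed_Iic), hpre, hσ.normalized]
    simp
  have hbdd : BddBelow S := by
    refine ⟨-‖a‖, fun t ht => ?_⟩
    by_contra hlt
    push_neg at hlt
    have hpre : a ⁻¹' (Iic t) = (∅ : Set X) := by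
      ext x
      simp only [mem_preimage, mem_Iic, mem_empty_iff_false, iff_false, not_le]
      have := a.norm_coe_le_norm x
      rw [Real.norm_eq_abs] at this
      linarith [(abs_le.1 this).1]
    have : νa (Iic t) = 0 := by
      rw [ha _ (Or.inr isClosed_Iic), hpre, hempty]; simp
    rw [ht] at this
    exact one_ne_zero this
  set c : ℝ := sInf S with hc
  have hge : ∀ t, c < t → νa (Iic t) = 1 := by
    intro t ht
    obtain ⟨s, hsS, hst⟩ := (csInf_lt_iff hbdd ⟨_, hSne⟩).1 ht
    exact hup s hsS t hst.le
  have hlt : ∀ t, t < c → νa (Iic t) = 0 := by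
    intro t ht
    rcases h01 (Iic t) (Or.inr isClosed_Iic) with h | h
    · exact h
    · exact absurd (csInf_le hbdd h) (not_le.2 ht)
  -- νa (Iic c) = 1
  have hIic : νa (Iic c) = 1 := by
    have hset : Iic c = ⋂ n : ℕ, Iic (c + 1 / (n + 1)) := by
      ext x
      simp only [mem_Iic, mem_iInter]
      constructor
      · intro hx n
        have : (0:ℝ) < 1 / (n + 1) := by positivity
        linarith
      · intro hx
        refine le_of_forall_pos_le_add fun ε hε => ?_
        obtain ⟨n, hn⟩ := exists_nat_one_div_lt hε
        have := hx n
        push_cast at this hn ⊢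
        linarith
    have key : ∀ m n : ℕ, m ≤ n → (1:ℝ) / (n + 1) ≤ 1 / (m + 1) := by
      intro m n h
      apply one_div_le_one_div_of_le (by positivity)
      have : (m:ℝ) ≤ n := Nat.cast_le.2 h
      linarith
    have hdir : Directed (· ⊇ ·) (fun n : ℕ => Iic (c + 1 / (n + 1 : ℝ))) := by
      intro m n
      exact ⟨max m n,
        Iic_subset_Iic.2 (by linarith [key m (max m n) (le_max_left m n)]),
        Iic_subset_Iic.2 (by linarith [key n (max m n) (le_max_right m n)])⟩
    rw [hset, Directed.measure_iInter
      (fun n => measurableSet_Iic.nullMeasurableSet) hdir ⟨0, measure_ne_top νa _⟩]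
    have hone : ∀ n : ℕ, νa (Iic (c + 1 / (n + 1))) = 1 := by
      intro n
      apply hge
      have : (0:ℝ) < 1 / ((n:ℝ) + 1) := by positivity
      linarith
    rw [iInf_congr hone]
    exact iInf_const
  -- νa (Iio c) = 0
  have hIio : νa (Iio c) = 0 := by
    have hset : Iio c = ⋃ n : ℕ, Iic (c - 1 / (n + 1)) := by
      ext x
      simp only [mem_Iio, mem_iUnion, mem_Iic]
      constructor
      · intro hx
        obtain ⟨n, hn⟩ := exists_nat_one_div_lt (sub_pos.2 hx)
        exact ⟨n, by push_cast at hn ⊢; linarith⟩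
      · rintro ⟨n, hn⟩
        have : (0:ℝ) < 1 / ((n:ℝ) + 1) := by positivity
        linarith
    rw [hset]
    refine measure_iUnion_null fun n => hlt _ ?_
    have : (0:ℝ) < 1 / ((n:ℝ) + 1) := by positivity
    linarith
  -- νa {c} = 1
  have hsing : νa {c} = 1 := by
    have hsub : Iic c ⊆ {c} ∪ Iio c := by
      intro x hx
      rcases eq_or_lt_of_le (mem_Iic.1 hx) with h | h
      · exact Or.inl (by simp [h])
      · exact Or.inr h
    have : (1 : ENNReal) ≤ νa {c} := by
      calc (1 : ENNReal) = νa (Iic c) := hIic.symm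
        _ ≤ νa ({c} ∪ Iio c) := measure_mono hsub
        _ ≤ νa {c} + νa (Iio c) := measure_union_le _ _
        _ = νa {c} := by rw [hIio, add_zero]
    exact le_antisymm prob_le_one this
  have hdirac : νa = MeasureTheory.Measure.dirac c := prob_eq_dirac_of_singleton hsing
  have hint : ∫ t, t ∂νa = c := by
    rw [hdirac]
    exact integral_dirac (fun t : ℝ => t) c
  constructor
  · rw [hint]; exact hdirac
  · intro φ b hb νb hνb hb'
    haveI := hνb
    have hbsing : νb {φ c} = 1 := by
      have himg : IsImage ({φ c} : Set ℝ) := Or.inr isClosed_singleton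
      have hpreb : b ⁻¹' {φ c} = a ⁻¹' (φ ⁻¹' {φ c}) := by
        ext x; simp [hb x]
      have himgφ : IsImage (φ ⁻¹' {φ c}) := Or.inr (isClosed_singleton.preimage φ.continuous)
      have : νb {φ c} = νa (φ ⁻¹' {φ c}) := by
        rw [hb' _ himg, hpreb, ← ha _ himgφ]
      rw [this, hdirac, MeasureTheory.Measure.dirac_apply_of_mem]
      exact rfl
    have hbdirac : νb = MeasureTheory.Measure.dirac (φ c) := prob_eq_dirac_of_singleton hbsing
    rw [hbdirac, hint]
    exact integral_dirac (fun t : ℝ => t) (φ c)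
end

section
/- Monotone convergence for quasi-integrals: if μ is a quasi-measure on a Hausdorff space X and (a_λ) is an increasing net in C_b(X) converging pointwise up to a ∈ C_b(X), then the quasi-integrals μ(a_λ) converge increasingly to μ(a). -/
open Set MeasureTheory BoundedContinuousFunction Filter Topology
open Function
set_option linter.unusedSectionVars false

namespace QMAux

variable {X : Type*} [TopologicalSpace X] [T2Space X] {μ : Set X → ℝ}

theorem isImage_compl {A : Set X} (h : IsImage A) : IsImage Aᶜ := by
  rcases h with h | h
  · exact Or.inr h.isClosed_compl
  · exact Or.inl h.isOpen_compl

theorem qm_empty (hμ : IsQuasiMeasure μ) : μ (∅ : Set X) = 0 := by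
  have := hμ.additive ∅ ∅ (Or.inl isOpen_empty) (Or.inl isOpen_empty)
    (Or.inl (isOpen_empty.union isOpen_empty)) (by simp)
  simp at this
  linarith

theorem qm_compl (hμ : IsQuasiMeasure μ) {A : Set X} (h : IsImage A) : μ A + μ Aᶜ = 1 := by
  have := hμ.additive A Aᶜ h (isImage_compl h) (Set.union_compl_self A ▸ (Or.inl isOpen_univ : IsImage (Set.univ : Set X))) disjoint_compl_right
  rw [Set.union_compl_self] at this
  rw [← this, hμ.normalized]

theorem qm_mono_oo (hμ : IsQuasiMeasure μ) {U V : Set X} (hU : IsOpen U) (hV : IsOpen V)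
    (h : U ⊆ V) : μ U ≤ μ V := by
  have h1 := hμ.regular U hU
  have h2 := hμ.regular V hV
  refine h1.2 fun r hr => ?_
  rcases hr with ⟨K, hK, hKU, rfl⟩
  exact h2.1 ⟨K, hK, hKU.trans h, rfl⟩

theorem qm_mono_co (hμ : IsQuasiMeasure μ) {C U : Set X} (hC : IsClosed C) (hU : IsOpen U)
    (h : C ⊆ U) : μ C ≤ μ U := by
  have hadd := hμ.additive C (U \ C) (Or.inr hC) (Or.inl (hU.sdiff hC))
    (by rw [Set.union_diff_cancel h]; exact Or.inl hU) disjoint_sdiff_right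
  rw [Set.union_diff_cancel h] at hadd
  have := hμ.nonneg (U \ C) (Or.inl (hU.sdiff hC))
  linarith

theorem qm_mono_cc (hμ : IsQuasiMeasure μ) {C D : Set X} (hC : IsClosed C) (hD : IsClosed D)
    (h : C ⊆ D) : μ C ≤ μ D := by
  have h1 := qm_compl hμ (Or.inr hC)
  have h2 := qm_compl hμ (Or.inr hD)
  have := qm_mono_oo hμ hD.isOpen_compl hC.isOpen_compl (Set.compl_subset_compl.2 h)
  linarith

theorem qm_mono_oc (hμ : IsQuasiMeasure μ) {U D : Set X} (hU : IsOpen U) (hD : IsClosed D)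
    (h : U ⊆ D) : μ U ≤ μ D := by
  refine (hμ.regular U hU).2 fun r hr => ?_
  rcases hr with ⟨K, hK, hKU, rfl⟩
  exact qm_mono_cc hμ hK.isClosed hD (hKU.trans h)

theorem qm_mono (hμ : IsQuasiMeasure μ) {A B : Set X} (hA : IsImage A) (hB : IsImage B)
    (h : A ⊆ B) : μ A ≤ μ B := by
  rcases hA with hA | hA <;> rcases hB with hB | hB
  · exact qm_mono_oo hμ hA hB h
  · exact qm_mono_oc hμ hA hB h
  · exact qm_mono_co hμ hA hB h
  · exact qm_mono_cc hμ hA hB h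

theorem qm_le_one (hμ : IsQuasiMeasure μ) {A : Set X} (hA : IsImage A) : μ A ≤ 1 := by
  have := qm_mono hμ hA (Or.inl isOpen_univ) (Set.subset_univ A)
  rwa [hμ.normalized] at this

theorem qm_compact_le (hμ : IsQuasiMeasure μ) {K U : Set X} (hK : IsCompact K) (hU : IsOpen U)
    (h : K ⊆ U) : μ K ≤ μ U :=
  qm_mono_co hμ hK.isClosed hU h

/-- Continuity from below along directed families of open sets. -/
theorem qm_sup (hμ : IsQuasiMeasure μ) {ι : Type*} [Preorder ι] [IsDirected ι (· ≤ ·)] [Nonempty ι]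
    (U : ι → Set X) (hopen : ∀ i, IsOpen (U i)) (hmono : Monotone U)
    {c : ℝ} (hc : c < μ (⋃ i, U i)) : ∃ i, c < μ (U i) := by
  have hUopen : IsOpen (⋃ i, U i) := isOpen_iUnion hopen
  have hlub := hμ.regular _ hUopen
  obtain ⟨r, ⟨K, hK, hKU, rfl⟩, hcr, -⟩ := hlub.exists_between hc
  obtain ⟨F, hF⟩ := hK.elim_finite_subcover U hopen hKU
  obtain ⟨j, hj⟩ := F.exists_le
  refine ⟨j, lt_of_lt_of_le hcr (qm_compact_le hμ hK (hopen j) ?_)⟩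
  exact hF.trans (Set.iUnion₂_subset fun i hi => hmono (hj i hi))

/-- Finite additivity for pairwise disjoint open sets. -/
theorem qm_finsum (hμ : IsQuasiMeasure μ) {κ : Type*} (s : Finset κ) (V : κ → Set X)
    (hopen : ∀ i ∈ s, IsOpen (V i))
    (hdisj : ∀ i ∈ s, ∀ j ∈ s, i ≠ j → Disjoint (V i) (V j)) :
    μ (⋃ i ∈ s, V i) = ∑ i ∈ s, μ (V i) := by
  classical
  induction s using Finset.induction_on with
  | empty => simpa using qm_empty hμ
  | insert x t hx ih =>
    have hVo : IsOpen (V x) := hopen x (Finset.mem_insert_self x t)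
    have hto : IsOpen (⋃ i ∈ t, V i) :=
      isOpen_biUnion fun i hi => hopen i (Finset.mem_insert_of_mem hi)
    have hd : Disjoint (V x) (⋃ i ∈ t, V i) := by
      refine Set.disjoint_iUnion₂_right.2 fun i hi => ?_
      exact hdisj x (Finset.mem_insert_self x t) i (Finset.mem_insert_of_mem hi)
        (fun h => hx (h ▸ hi))
    have hadd := hμ.additive (V x) (⋃ i ∈ t, V i) (Or.inl hVo) (Or.inl hto)
      (Or.inl (hVo.union hto)) hd
    rw [Finset.set_biUnion_insert, hadd, Finset.sum_insert hx,
      ih (fun i hi => hopen i (Finset.mem_insert_of_mem hi))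
        (fun i hi j hj hij => hdisj i (Finset.mem_insert_of_mem hi) j
          (Finset.mem_insert_of_mem hj) hij)]

end QMAux
namespace QMAux

variable {X : Type*} [TopologicalSpace X] [T2Space X] {μ : Set X → ℝ}

theorem closed_Iic_pre (a : X →ᵇ ℝ) (t : ℝ) : IsClosed (a ⁻¹' Set.Iic t) :=
  isClosed_Iic.preimage a.continuous

theorem qm_compl_Iic (hμ : IsQuasiMeasure μ) (a : X →ᵇ ℝ) (t : ℝ) :
    μ (a ⁻¹' Set.Iic t) + μ (a ⁻¹' Set.Ioi t) = 1 := by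
  have := qm_compl hμ (Or.inr (closed_Iic_pre a t))
  rwa [← Set.preimage_compl, Set.compl_Iic] at this

theorem qF_mono (hμ : IsQuasiMeasure μ) (a : X →ᵇ ℝ) :
    Monotone (fun t => μ (a ⁻¹' Set.Iic t)) := fun s t hst =>
  qm_mono_cc hμ (closed_Iic_pre a s) (closed_Iic_pre a t)
    (Set.preimage_mono (Set.Iic_subset_Iic.2 hst))

theorem qF_right_continuous (hμ : IsQuasiMeasure μ) (a : X →ᵇ ℝ) (x : ℝ) :
    ContinuousWithinAt (fun t => μ (a ⁻¹' Set.Iic t)) (Set.Ici x) x := by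
  rw [ContinuousWithinAt]
  refine tendsto_order.2 ⟨fun c hc => ?_, fun c hc => ?_⟩
  · filter_upwards [self_mem_nhdsWithin] with t ht
    exact lt_of_lt_of_le hc (qF_mono hμ a ht)
  · have hU : IsOpen (a ⁻¹' Set.Ioi x) := isOpen_Ioi.preimage a.continuous
    have hlub := hμ.regular _ hU
    have hlt : μ (a ⁻¹' Set.Ioi x) - (c - μ (a ⁻¹' Set.Iic x)) < μ (a ⁻¹' Set.Ioi x) := by
      linarith
    obtain ⟨r, ⟨K, hK, hKU, rfl⟩, hr1, -⟩ := hlub.exists_between hlt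
    have hcx := qm_compl_Iic hμ a x
    rcases K.eq_empty_or_nonempty with rfl | hne
    · rw [qm_empty hμ] at hr1
      filter_upwards [self_mem_nhdsWithin] with t _
      have h1 : μ (a ⁻¹' Set.Iic t) ≤ 1 := qm_le_one hμ (Or.inr (closed_Iic_pre a t))
      linarith
    · have himg : IsCompact (a '' K) := hK.image a.continuous
      have himgne : (a '' K).Nonempty := hne.image a
      have hmmem : sInf (a '' K) ∈ a '' K := himg.sInf_mem himgne
      obtain ⟨z, hzK, hzm⟩ := hmmem
      have hmx : x < sInf (a '' K) := hzm ▸ hKU hzK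
      filter_upwards [Ico_mem_nhdsGE hmx] with t ⟨hxt, htm⟩
      have hKt : K ⊆ a ⁻¹' Set.Ioi t := fun w hw => by
        have : sInf (a '' K) ≤ a w := csInf_le himg.bddBelow ⟨w, hw, rfl⟩
        exact lt_of_lt_of_le htm this
      have h2 : μ K ≤ μ (a ⁻¹' Set.Ioi t) :=
        qm_compact_le hμ hK (isOpen_Ioi.preimage a.continuous) hKt
      have hct := qm_compl_Iic hμ a t
      linarith

/-- The cumulative distribution function of `μ ∘ a⁻¹` as a Stieltjes function. -/
noncomputable def qF (hμ : IsQuasiMeasure μ) (a : X →ᵇ ℝ) : StieltjesFunction ℝ where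
  toFun t := μ (a ⁻¹' Set.Iic t)
  mono' := qF_mono hμ a
  right_continuous' := qF_right_continuous hμ a

@[simp] theorem qF_apply (hμ : IsQuasiMeasure μ) (a : X →ᵇ ℝ) (t : ℝ) :
    qF hμ a t = μ (a ⁻¹' Set.Iic t) := rfl

theorem qF_tendsto_atBot (hμ : IsQuasiMeasure μ) (a : X →ᵇ ℝ) :
    Tendsto (qF hμ a) atBot (𝓝 0) := by
  apply Tendsto.congr' _ (tendsto_const_nhds (α := ℝ) (f := atBot))
  filter_upwards [eventually_le_atBot (-‖a‖ - 1)] with t ht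
  have : a ⁻¹' Set.Iic t = ∅ := by
    rw [Set.eq_empty_iff_forall_notMem]
    intro x hx
    have h1 : ‖a x‖ ≤ ‖a‖ := a.norm_coe_le_norm x
    have h2 : a x ≤ t := hx
    rw [Real.norm_eq_abs, abs_le] at h1
    linarith
  simp [qF, this, qm_empty hμ]

theorem qF_tendsto_atTop (hμ : IsQuasiMeasure μ) (a : X →ᵇ ℝ) :
    Tendsto (qF hμ a) atTop (𝓝 1) := by
  apply Tendsto.congr' _ (tendsto_const_nhds (α := ℝ) (f := atTop))
  filter_upwards [eventually_ge_atTop ‖a‖] with t ht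
  have : a ⁻¹' Set.Iic t = Set.univ := by
    rw [Set.eq_univ_iff_forall]
    intro x
    have h1 : ‖a x‖ ≤ ‖a‖ := a.norm_coe_le_norm x
    rw [Real.norm_eq_abs, abs_le] at h1
    exact le_trans h1.2 ht
  simp [qF, this, hμ.normalized]

/-- The candidate representing measure. -/
noncomputable def qnu (hμ : IsQuasiMeasure μ) (a : X →ᵇ ℝ) : Measure ℝ := (qF hμ a).measure

theorem qnu_prob (hμ : IsQuasiMeasure μ) (a : X →ᵇ ℝ) : IsProbabilityMeasure (qnu hμ a) := by
  constructor
  rw [qnu, StieltjesFunction.measure_univ _ (qF_tendsto_atBot hμ a) (qF_tendsto_atTop hμ a)]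
  norm_num

theorem rho_Iio (hμ : IsQuasiMeasure μ) (a : X →ᵇ ℝ) {s t : ℝ} (h : s < t) :
    μ (a ⁻¹' Set.Iio t) = μ (a ⁻¹' Set.Iic s) + μ (a ⁻¹' Set.Ioo s t) := by
  have hd : Disjoint (Set.Iic s) (Set.Ioo s t) :=
    Set.disjoint_left.2 fun x hx hx2 => absurd hx2.1 (not_lt.2 hx)
  have := hμ.additive (a ⁻¹' Set.Iic s) (a ⁻¹' Set.Ioo s t)
    (Or.inr (closed_Iic_pre a s)) (Or.inl (isOpen_Ioo.preimage a.continuous))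
    (by rw [← Set.preimage_union, Set.Iic_union_Ioo_eq_Iio h]
        exact Or.inl (isOpen_Iio.preimage a.continuous))
    (hd.preimage a)
  rwa [← Set.preimage_union, Set.Iic_union_Ioo_eq_Iio h] at this

theorem qnu_Ioo (hμ : IsQuasiMeasure μ) (a : X →ᵇ ℝ) (s t : ℝ) :
    qnu hμ a (Set.Ioo s t) = ENNReal.ofReal (μ (a ⁻¹' Set.Ioo s t)) := by
  rcases le_or_gt t s with hts | hst
  · rw [Set.Ioo_eq_empty (not_lt.2 hts)]
    simp [qm_empty hμ]
  · rw [qnu, StieltjesFunction.measure_Ioo]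
    congr 1
    have hFmono : Monotone (qF hμ a) := (qF hμ a).mono'
    have key : leftLim (qF hμ a) t - qF hμ a s = μ (a ⁻¹' Set.Ioo s t) := by
      apply le_antisymm
      · rw [sub_le_iff_le_add]
        have hev : ∀ᶠ t' in 𝓝[<] t,
            qF hμ a t' ≤ μ (a ⁻¹' Set.Ioo s t) + qF hμ a s := by
          filter_upwards [self_mem_nhdsWithin] with t' ht'
          rcases le_or_gt t' s with h1 | h1
          · have := qF_mono hμ a h1
            have h0 := hμ.nonneg _ (Or.inl (isOpen_Ioo.preimage a.continuous) :
              IsImage (a ⁻¹' Set.Ioo s t))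
            simp only [qF_apply] at *
            linarith
          · set t'' := (t' + t) / 2 with ht''
            have h2 : t' < t'' := by rw [ht'']; simp only [Set.mem_Iio] at ht'; linarith
            have h3 : t'' < t := by rw [ht'']; simp only [Set.mem_Iio] at ht'; linarith
            have h4 : s < t'' := lt_trans h1 h2
            have step1 : μ (a ⁻¹' Set.Iic t') ≤ μ (a ⁻¹' Set.Iio t'') :=
              qm_mono_co hμ (closed_Iic_pre a t') (isOpen_Iio.preimage a.continuous)
                (Set.preimage_mono (Set.Iic_subset_Iio.2 h2))
            have step2 := rho_Iio hμ a h4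
            have step3 : μ (a ⁻¹' Set.Ioo s t'') ≤ μ (a ⁻¹' Set.Ioo s t) :=
              qm_mono_oo hμ (isOpen_Ioo.preimage a.continuous)
                (isOpen_Ioo.preimage a.continuous)
                (Set.preimage_mono (Set.Ioo_subset_Ioo_right h3.le))
            simp only [qF_apply]
            linarith
        exact le_of_tendsto (hFmono.tendsto_leftLim t) hev
      · refine (hμ.regular _ (isOpen_Ioo.preimage a.continuous)).2 fun r hr => ?_
        rcases hr with ⟨K, hK, hKU, rfl⟩
        have hsl : qF hμ a s ≤ leftLim (qF hμ a) t := hFmono.le_leftLim hst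
        rcases K.eq_empty_or_nonempty with rfl | hne
        · rw [qm_empty hμ]; linarith
        · have himg : IsCompact (a '' K) := hK.image a.continuous
          have himgne : (a '' K).Nonempty := hne.image a
          have hqmem : sSup (a '' K) ∈ a '' K := himg.sSup_mem himgne
          obtain ⟨z, hzK, hzq⟩ := hqmem
          have hqs : s < sSup (a '' K) := hzq ▸ (hKU hzK).1
          have hqt : sSup (a '' K) < t := hzq ▸ (hKU hzK).2
          set t' := (sSup (a '' K) + t) / 2 with ht'
          have h1 : sSup (a '' K) < t' := by rw [ht']; linarith
          have h2 : t' < t := by rw [ht']; linarith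
          have h3 : s < t' := lt_trans hqs h1
          have hKsub : K ⊆ a ⁻¹' Set.Ioo s t' := fun w hw =>
            ⟨(hKU hw).1, lt_of_le_of_lt (le_csSup himg.bddAbove ⟨w, hw, rfl⟩) h1⟩
          have step1 : μ K ≤ μ (a ⁻¹' Set.Ioo s t') :=
            qm_compact_le hμ hK (isOpen_Ioo.preimage a.continuous) hKsub
          have step2 := rho_Iio hμ a h3
          have step3 : μ (a ⁻¹' Set.Iio t') ≤ μ (a ⁻¹' Set.Iic t') :=
            qm_mono_oc hμ (isOpen_Iio.preimage a.continuous) (closed_Iic_pre a t')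
              (Set.preimage_mono Set.Iio_subset_Iic_self)
          have step4 : qF hμ a t' ≤ leftLim (qF hμ a) t := hFmono.le_leftLim h2
          simp only [qF_apply] at *
          linarith
    rw [key]

end QMAux
namespace QMAux

variable {X : Type*} [TopologicalSpace X] [T2Space X] {μ : Set X → ℝ}

theorem IsImage.measurableSet {A : Set ℝ} (h : IsImage A) : MeasurableSet A := by
  rcases h with h | h
  exacts [h.measurableSet, h.measurableSet]

/-- Around each compact subset of an open set of `ℝ` there is a finite disjoint union of
open intervals, on which `qnu` agrees with `μ ∘ a⁻¹`. -/
theorem key_subcover (hμ : IsQuasiMeasure μ) (a : X →ᵇ ℝ) {K U : Set ℝ}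
    (hK : IsCompact K) (hU : IsOpen U) (hsub : K ⊆ U) :
    ∃ V : Set ℝ, IsOpen V ∧ K ⊆ V ∧ V ⊆ U ∧
      qnu hμ a V = ENNReal.ofReal (μ (a ⁻¹' V)) := by
  classical
  have hcover : K ⊆ ⋃ x ∈ K, connectedComponentIn U x := fun x hx =>
    Set.mem_biUnion hx (mem_connectedComponentIn (hsub hx))
  obtain ⟨b, hbK, hbfin, hbcover⟩ := hK.elim_finite_subcover_image
    (fun x (_ : x ∈ K) => (hU.connectedComponentIn : IsOpen (connectedComponentIn U x))) hcover
  set S : Finset (Set ℝ) := hbfin.toFinset.image (fun x => connectedComponentIn U x) with hS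
  have hSopen : ∀ c ∈ S, IsOpen c := by
    intro c hc
    obtain ⟨x, -, rfl⟩ := Finset.mem_image.1 hc
    exact hU.connectedComponentIn
  have hSsub : ∀ c ∈ S, c ⊆ U := by
    intro c hc
    obtain ⟨x, -, rfl⟩ := Finset.mem_image.1 hc
    exact connectedComponentIn_subset U x
  have hSdisj : ∀ c ∈ S, ∀ c' ∈ S, c ≠ c' → Disjoint c c' := by
    intro c hc c' hc' hne
    obtain ⟨x, -, rfl⟩ := Finset.mem_image.1 hc
    obtain ⟨y, -, rfl⟩ := Finset.mem_image.1 hc'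
    rw [Set.disjoint_left]
    intro z hz hz'
    have e1 := connectedComponentIn_eq hz
    have e2 := connectedComponentIn_eq hz'
    exact hne (e1.trans e2.symm)
  have hKS : K ⊆ ⋃ c ∈ S, c := by
    intro x hx
    obtain ⟨y, hy, hxy⟩ := Set.mem_iUnion₂.1 (hbcover hx)
    exact Set.mem_biUnion (Finset.mem_image_of_mem _ (hbfin.mem_toFinset.2 hy)) hxy
  have hKc : ∀ c ∈ S, IsCompact (K ∩ c) := by
    intro c hc
    have heq : K ∩ c = K \ (⋃ c' ∈ S.erase c, c') := by
      ext z
      simp only [Set.mem_inter_iff, Set.mem_diff, Set.mem_iUnion, not_exists]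
      constructor
      · rintro ⟨hzK, hzc⟩
        refine ⟨hzK, fun c' hc' hzc' => ?_⟩
        have := hSdisj c hc c' (Finset.mem_of_mem_erase hc')
          (Ne.symm (Finset.ne_of_mem_erase hc'))
        exact Set.disjoint_left.1 this hzc hzc'
      · rintro ⟨hzK, hz⟩
        refine ⟨hzK, ?_⟩
        obtain ⟨c', hc', hzc'⟩ := Set.mem_iUnion₂.1 (hKS hzK)
        rcases eq_or_ne c' c with rfl | hne
        · exact hzc'
        · exact absurd hzc' (hz c' (Finset.mem_erase.2 ⟨hne, hc'⟩))
    rw [heq]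
    exact hK.diff (isOpen_biUnion fun c' hc' => hSopen c' (Finset.mem_of_mem_erase hc'))
  have hint : ∀ c ∈ S, ∃ st : ℝ × ℝ,
      K ∩ c ⊆ Set.Ioo st.1 st.2 ∧ Set.Ioo st.1 st.2 ⊆ c := by
    intro c hc
    rcases (K ∩ c).eq_empty_or_nonempty with hemp | hne
    · refine ⟨(0, 0), ?_, ?_⟩ <;> simp [hemp]
    · have hcomp := hKc c hc
      have hbdd₁ := hcomp.bddBelow
      have hbdd₂ := hcomp.bddAbove
      set p := sInf (K ∩ c) with hp
      set q := sSup (K ∩ c) with hq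
      have hpmem : p ∈ K ∩ c := hcomp.sInf_mem hne
      have hqmem : q ∈ K ∩ c := hcomp.sSup_mem hne
      have hpq : p ≤ q := csInf_le_csSup hne hbdd₁ hbdd₂
      have hord : Set.OrdConnected c := by
        obtain ⟨x, -, rfl⟩ := Finset.mem_image.1 hc
        exact isPreconnected_connectedComponentIn.ordConnected
      have hIcc : Set.Icc p q ⊆ c := hord.out hpmem.2 hqmem.2
      obtain ⟨δ, hδ, hthick⟩ := isCompact_Icc.exists_thickening_subset_open (hSopen c hc) hIcc
      refine ⟨(p - δ, q + δ), fun z hz => ?_, fun z hz => ?_⟩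
      · have h1 : p ≤ z := csInf_le hbdd₁ hz
        have h2 : z ≤ q := le_csSup hbdd₂ hz
        exact ⟨show p - δ < z by linarith, show z < q + δ by linarith⟩
      · obtain ⟨hz1, hz2⟩ := hz
        have hz1' : p - δ < z := hz1
        have hz2' : z < q + δ := hz2
        apply hthick
        rw [Metric.mem_thickening_iff]
        rcases lt_or_ge z p with h1 | h1
        · exact ⟨p, Set.left_mem_Icc.2 hpq, by
            rw [Real.dist_eq, abs_sub_lt_iff]
            constructor <;> linarith⟩
        · rcases le_or_gt z q with h2 | h2
          · exact ⟨z, ⟨h1, h2⟩, by simpa using hδ⟩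
          · exact ⟨q, Set.right_mem_Icc.2 hpq, by
              rw [Real.dist_eq, abs_sub_lt_iff]
              constructor <;> linarith⟩
  choose! g hg1 hg2 using hint
  refine ⟨⋃ c ∈ S, Set.Ioo (g c).1 (g c).2, isOpen_biUnion fun c _ => isOpen_Ioo,
    ?_, ?_, ?_⟩
  · intro x hx
    obtain ⟨c, hc, hxc⟩ := Set.mem_iUnion₂.1 (hKS hx)
    exact Set.mem_biUnion hc (hg1 c hc ⟨hx, hxc⟩)
  · exact Set.iUnion₂_subset fun c hc => (hg2 c hc).trans (hSsub c hc)
  · have hdisj' : ∀ c ∈ S, ∀ c' ∈ S, c ≠ c' →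
        Disjoint (Set.Ioo (g c).1 (g c).2) (Set.Ioo (g c').1 (g c').2) := fun c hc c' hc' hne =>
      Set.disjoint_of_subset (hg2 c hc) (hg2 c' hc') (hSdisj c hc c' hc' hne)
    rw [measure_biUnion_finset (fun c hc c' hc' hne => hdisj' c hc c' hc' hne)
      (fun c _ => measurableSet_Ioo)]
    have : ∀ c ∈ S, qnu hμ a (Set.Ioo (g c).1 (g c).2)
        = ENNReal.ofReal (μ (a ⁻¹' Set.Ioo (g c).1 (g c).2)) := fun c _ => qnu_Ioo hμ a _ _
    rw [Finset.sum_congr rfl this, ← ENNReal.ofReal_sum_of_nonneg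
      (fun c _ => hμ.nonneg _ (Or.inl (isOpen_Ioo.preimage a.continuous)))]
    congr 1
    rw [Set.preimage_iUnion₂]
    exact (qm_finsum hμ S _ (fun c _ => isOpen_Ioo.preimage a.continuous)
      (fun c hc c' hc' hne => (hdisj' c hc c' hc' hne).preimage a)).symm

theorem qnu_open (hμ : IsQuasiMeasure μ) (a : X →ᵇ ℝ) {U : Set ℝ} (hU : IsOpen U) :
    qnu hμ a U = ENNReal.ofReal (μ (a ⁻¹' U)) := by
  haveI := qnu_prob hμ a
  apply le_antisymm
  · by_contra hlt
    push_neg at hlt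
    obtain ⟨K, hKU, hK, hK2⟩ := hU.exists_lt_isCompact hlt
    obtain ⟨V, hVopen, hKV, hVU, hVeq⟩ := key_subcover hμ a hK hU hKU
    have h1 : qnu hμ a K ≤ qnu hμ a V := measure_mono hKV
    have h2 : ENNReal.ofReal (μ (a ⁻¹' V)) ≤ ENNReal.ofReal (μ (a ⁻¹' U)) :=
      ENNReal.ofReal_le_ofReal (qm_mono_oo hμ (hVopen.preimage a.continuous)
        (hU.preimage a.continuous) (Set.preimage_mono hVU))
    rw [hVeq] at h1
    exact absurd (h1.trans h2) (not_le.2 hK2)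
  · rw [ENNReal.ofReal_le_iff_le_toReal (measure_ne_top _ _)]
    refine (hμ.regular _ (hU.preimage a.continuous)).2 fun r hr => ?_
    rcases hr with ⟨L, hL, hLU, rfl⟩
    have himg : IsCompact (a '' L) := hL.image a.continuous
    have himgU : a '' L ⊆ U := Set.image_subset_iff.2 hLU
    obtain ⟨V, hVopen, hKV, hVU, hVeq⟩ := key_subcover hμ a himg hU himgU
    have h1 : μ L ≤ μ (a ⁻¹' V) := by
      refine qm_mono_co hμ hL.isClosed (hVopen.preimage a.continuous) ?_
      exact (Set.subset_preimage_image a L).trans (Set.preimage_mono hKV)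
    have h2 : μ (a ⁻¹' V) = (qnu hμ a V).toReal := by
      rw [hVeq, ENNReal.toReal_ofReal (hμ.nonneg _ (Or.inl (hVopen.preimage a.continuous)))]
    have h3 : (qnu hμ a V).toReal ≤ (qnu hμ a U).toReal :=
      ENNReal.toReal_mono (measure_ne_top _ _) (measure_mono hVU)
    linarith

theorem qnu_image (hμ : IsQuasiMeasure μ) (a : X →ᵇ ℝ) {A : Set ℝ} (hA : IsImage A) :
    qnu hμ a A = ENNReal.ofReal (μ (a ⁻¹' A)) := by
  haveI := qnu_prob hμ a
  rcases hA with hA | hA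
  · exact qnu_open hμ a hA
  · have hAc : IsOpen Aᶜ := hA.isOpen_compl
    have hpre : IsClosed (a ⁻¹' A) := hA.preimage a.continuous
    have hcompl := qm_compl hμ (Or.inr hpre : IsImage (a ⁻¹' A))
    have h1 : qnu hμ a A = 1 - qnu hμ a Aᶜ := by
      rw [qnu_open hμ a hAc]
      have := measure_compl (hA.measurableSet.compl) (measure_ne_top (qnu hμ a) Aᶜ)
      rw [compl_compl, measure_univ] at this
      rw [← qnu_open hμ a hAc, this]
    rw [h1, qnu_open hμ a hAc]
    have hx0 : 0 ≤ μ (a ⁻¹' A) := hμ.nonneg _ (Or.inr hpre)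
    have hx1 : μ (a ⁻¹' A) ≤ 1 := qm_le_one hμ (Or.inr hpre)
    have hρc : μ (a ⁻¹' Aᶜ) = 1 - μ (a ⁻¹' A) := by
      rw [Set.preimage_compl]; linarith
    rw [hρc, ENNReal.ofReal_sub _ hx0, ENNReal.ofReal_one,
      ENNReal.sub_sub_cancel ENNReal.one_ne_top (ENNReal.ofReal_le_one.2 hx1)]

theorem exists_rep (hμ : IsQuasiMeasure μ) (a : X →ᵇ ℝ) :
    ∃ ν : Measure ℝ, IsProbabilityMeasure ν ∧
      ∀ A : Set ℝ, IsImage A → ν A = ENNReal.ofReal (μ (a ⁻¹' A)) :=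
  ⟨qnu hμ a, qnu_prob hμ a, fun _ hA => qnu_image hμ a hA⟩

end QMAux
namespace QMAux

variable {X : Type*} [TopologicalSpace X] [T2Space X] {μ : Set X → ℝ}

theorem preimage_Ioi_empty (a : X →ᵇ ℝ) {u : ℝ} (hu : ‖a‖ ≤ u) :
    a ⁻¹' Set.Ioi u = ∅ := by
  rw [Set.eq_empty_iff_forall_notMem]
  intro x hx
  have h1 : ‖a x‖ ≤ ‖a‖ := a.norm_coe_le_norm x
  rw [Real.norm_eq_abs, abs_le] at h1
  exact absurd (Set.mem_Ioi.1 hx) (not_lt.2 (h1.2.trans hu))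

theorem preimage_Iio_empty (a : X →ᵇ ℝ) {u : ℝ} (hu : u ≤ -‖a‖) :
    a ⁻¹' Set.Iio u = ∅ := by
  rw [Set.eq_empty_iff_forall_notMem]
  intro x hx
  have h1 : ‖a x‖ ≤ ‖a‖ := a.norm_coe_le_norm x
  rw [Real.norm_eq_abs, abs_le] at h1
  exact absurd (Set.mem_Iio.1 hx) (not_lt.2 (hu.trans h1.1))

/-- The layer-cake formula for the quasi-integral. -/
theorem qint_formula (hμ : IsQuasiMeasure μ) (a : X →ᵇ ℝ) {M : ℝ} (hM : ‖a‖ ≤ M) :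
    qint μ a = (∫ s in Set.Ioi (0:ℝ), μ (a ⁻¹' Set.Ioi (s - M))) - M := by
  classical
  have hex := exists_rep hμ a
  rw [qint, dif_pos hex]
  obtain ⟨hprob, hspec⟩ := hex.choose_spec
  set ν := hex.choose with hν
  have hM0 : 0 ≤ M := (norm_nonneg a).trans hM
  have hIoiM : ν (Set.Ioi M) = 0 := by
    rw [hspec _ (Or.inl isOpen_Ioi), preimage_Ioi_empty a hM, qm_empty hμ,
      ENNReal.ofReal_zero]
  have hIioM : ν (Set.Iio (-M)) = 0 := by
    rw [hspec _ (Or.inl isOpen_Iio), preimage_Iio_empty a (neg_le_neg hM), qm_empty hμ,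
      ENNReal.ofReal_zero]
  have hae : ∀ᵐ t ∂ν, t ∈ Set.Icc (-M) M := by
    rw [MeasureTheory.ae_iff]
    have hsub : {t : ℝ | ¬ t ∈ Set.Icc (-M) M} ⊆ Set.Iio (-M) ∪ Set.Ioi M := by
      intro t ht
      rw [Set.mem_setOf_eq, Set.mem_Icc, not_and_or, not_le, not_le] at ht
      rcases ht with h | h
      exacts [Or.inl h, Or.inr h]
    exact measure_mono_null hsub (measure_union_null hIioM hIoiM)
  have habs : ∀ᵐ t ∂ν, ‖t‖ ≤ M := by
    filter_upwards [hae] with t ht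
    rw [Real.norm_eq_abs, abs_le]
    exact ⟨ht.1, ht.2⟩
  have hint : Integrable (fun t : ℝ => t) ν :=
    ⟨measurable_id.aestronglyMeasurable, HasFiniteIntegral.of_bounded habs⟩
  have hshift : Integrable (fun t : ℝ => t + M) ν := hint.add (integrable_const M)
  have hnn : 0 ≤ᵐ[ν] fun t : ℝ => t + M := by
    filter_upwards [hae] with t ht
    simp only [Pi.zero_apply]
    linarith [ht.1]
  have hlc := hshift.integral_eq_integral_meas_lt hnn
  have heq : ∀ s : ℝ, ENNReal.toReal (ν {t : ℝ | s < t + M}) = μ (a ⁻¹' Set.Ioi (s - M)) := by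
    intro s
    have hset : {t : ℝ | s < t + M} = Set.Ioi (s - M) := by
      ext t; simp [Set.mem_Ioi, sub_lt_iff_lt_add]
    rw [hset, hspec _ (Or.inl isOpen_Ioi),
      ENNReal.toReal_ofReal (hμ.nonneg _ (Or.inl (isOpen_Ioi.preimage a.continuous)))]
  have h2 : ∫ t, (t + M) ∂ν = (∫ t, t ∂ν) + M := by
    rw [integral_add hint (integrable_const M), integral_const, probReal_univ, one_smul]
  have h3 : (∫ s in Set.Ioi (0:ℝ), ν.real {t : ℝ | s < t + M})
      = ∫ s in Set.Ioi (0:ℝ), μ (a ⁻¹' Set.Ioi (s - M)) := by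
    exact integral_congr_ae (Eventually.of_forall fun s => heq s)
  rw [h3] at hlc
  linarith [hlc, h2]

theorem integrand_anti (hμ : IsQuasiMeasure μ) (a : X →ᵇ ℝ) (M : ℝ) :
    Antitone (fun s => μ (a ⁻¹' Set.Ioi (s - M))) := by
  intro s s' h
  exact qm_mono_oo hμ (isOpen_Ioi.preimage a.continuous) (isOpen_Ioi.preimage a.continuous)
    (Set.preimage_mono (Set.Ioi_subset_Ioi (by linarith)))

theorem integrand_nonneg (hμ : IsQuasiMeasure μ) (a : X →ᵇ ℝ) (M s : ℝ) :
    0 ≤ μ (a ⁻¹' Set.Ioi (s - M)) :=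
  hμ.nonneg _ (Or.inl (isOpen_Ioi.preimage a.continuous))

theorem integrand_le_one (hμ : IsQuasiMeasure μ) (a : X →ᵇ ℝ) (M s : ℝ) :
    μ (a ⁻¹' Set.Ioi (s - M)) ≤ 1 :=
  qm_le_one hμ (Or.inl (isOpen_Ioi.preimage a.continuous))

theorem integrand_zero (hμ : IsQuasiMeasure μ) (a : X →ᵇ ℝ) {M s : ℝ} (hM : ‖a‖ ≤ M)
    (hs : 2 * M < s) : μ (a ⁻¹' Set.Ioi (s - M)) = 0 := by
  rw [preimage_Ioi_empty a (by linarith), qm_empty hμ]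

theorem integrand_integrableOn (hμ : IsQuasiMeasure μ) (a : X →ᵇ ℝ) {M : ℝ} (hM : ‖a‖ ≤ M) :
    IntegrableOn (fun s => μ (a ⁻¹' Set.Ioi (s - M))) (Set.Ioi (0:ℝ)) := by
  have hmeas : Measurable (fun s => μ (a ⁻¹' Set.Ioi (s - M))) :=
    (integrand_anti hμ a M).measurable
  have h1 : IntegrableOn (fun s => μ (a ⁻¹' Set.Ioi (s - M))) (Set.Ioc (0:ℝ) (2*M+1)) := by
    refine Integrable.mono' (g := fun _ => (1:ℝ))
      ((integrableOn_const_iff (C := (1:ℝ))).2 (Or.inr measure_Ioc_lt_top))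
      hmeas.aestronglyMeasurable ?_
    refine Eventually.of_forall fun s => ?_
    have hb : ((fun _ : ℝ => (1:ℝ)) s) = 1 := rfl
    rw [Real.norm_eq_abs, abs_le]
    exact ⟨by linarith [integrand_nonneg hμ a M s], integrand_le_one hμ a M s⟩
  have h2 : IntegrableOn (fun s => μ (a ⁻¹' Set.Ioi (s - M))) (Set.Ioi (2*M+1)) := by
    rw [integrableOn_congr_fun (g := fun _ => (0:ℝ))
      (fun s hs => integrand_zero hμ a hM (by exact lt_of_lt_of_le (by linarith) (le_of_lt hs)))
      measurableSet_Ioi]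
    exact integrableOn_zero
  have hM0 : 0 ≤ M := (norm_nonneg a).trans hM
  refine (h1.union h2).mono_set ?_
  rw [Set.Ioc_union_Ioi_eq_Ioi (by linarith)]

theorem qint_mono_aux (hμ : IsQuasiMeasure μ) {a b : X →ᵇ ℝ} (hab : a ≤ b) {M : ℝ}
    (hMa : ‖a‖ ≤ M) (hMb : ‖b‖ ≤ M) : qint μ a ≤ qint μ b := by
  rw [qint_formula hμ a hMa, qint_formula hμ b hMb]
  have h : ∀ s ∈ Set.Ioi (0:ℝ),
      μ (a ⁻¹' Set.Ioi (s - M)) ≤ μ (b ⁻¹' Set.Ioi (s - M)) := by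
    intro s _
    refine qm_mono_oo hμ (isOpen_Ioi.preimage a.continuous) (isOpen_Ioi.preimage b.continuous)
      fun x hx => ?_
    exact Set.mem_preimage.2 (lt_of_lt_of_le (Set.mem_preimage.1 hx) (hab x))
  have := setIntegral_mono_on (integrand_integrableOn hμ a hMa)
    (integrand_integrableOn hμ b hMb) measurableSet_Ioi h
  linarith

end QMAux

/-- monotone convergence for quasi-integrals along increasing nets. -/
theorem quasiIntegral_monotone_convergence {X : Type*} [TopologicalSpace X] [T2Space X]
    {ι : Type*} [Preorder ι] [IsDirected ι (· ≤ ·)] [Nonempty ι]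
    (μ : Set X → ℝ) (hμ : IsQuasiMeasure μ)
    (a : ι → (X →ᵇ ℝ)) (f : X →ᵇ ℝ) (hmono : Monotone a)
    (hle : ∀ i, a i ≤ f)
    (hlim : ∀ x, Filter.Tendsto (fun i => a i x) Filter.atTop (nhds (f x))) :
    Monotone (fun i => qint μ (a i)) ∧
      Filter.Tendsto (fun i => qint μ (a i)) Filter.atTop (nhds (qint μ f)) := by
  classical
  obtain ⟨i₀⟩ := (inferInstance : Nonempty ι)
  haveI : (Filter.atTop : Filter ι).NeBot :=
    Filter.atTop_neBot_iff.2 ⟨inferInstance, inferInstance⟩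
  have hmono' : Monotone (fun i => qint μ (a i)) := fun i j hij =>
    QMAux.qint_mono_aux hμ (hmono hij) (le_max_left _ _) (le_max_right _ _)
  have hub : ∀ i, qint μ (a i) ≤ qint μ f := fun i =>
    QMAux.qint_mono_aux hμ (hle i) (le_max_left _ _) (le_max_right _ _)
  refine ⟨hmono', ?_⟩
  have hbdd : BddAbove (Set.range fun i => qint μ (a i)) :=
    ⟨qint μ f, by rintro r ⟨i, rfl⟩; exact hub i⟩
  have htend := tendsto_atTop_ciSup hmono' hbdd
  suffices hS : (⨆ i, qint μ (a i)) = qint μ f by rwa [hS] at htend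
  refine le_antisymm (ciSup_le hub) (le_of_forall_pos_le_add fun ε hε => ?_)
  set M := max ‖a i₀‖ ‖f‖ + 1 with hMdef
  have hmax1 := le_max_left ‖a i₀‖ ‖f‖
  have hmax2 := le_max_right ‖a i₀‖ ‖f‖
  have hn0 := norm_nonneg (a i₀)
  have hM0 : 0 < M := by rw [hMdef]; linarith
  have hMf : ‖f‖ ≤ M := by rw [hMdef]; linarith
  have hMa : ∀ i, i₀ ≤ i → ‖a i‖ ≤ M := by
    intro i hi
    refine (BoundedContinuousFunction.norm_le (le_of_lt hM0)).2 fun x => ?_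
    have h1 : a i₀ x ≤ a i x := (hmono hi) x
    have h2 : a i x ≤ f x := (hle i) x
    have h3 : ‖a i₀ x‖ ≤ ‖a i₀‖ := (a i₀).norm_coe_le_norm x
    have h4 : ‖f x‖ ≤ ‖f‖ := f.norm_coe_le_norm x
    rw [Real.norm_eq_abs, abs_le] at h3 h4 ⊢
    constructor
    · rw [hMdef]; linarith [h3.1]
    · rw [hMdef]; linarith [h4.2]
  have hunion : ∀ u : ℝ, (⋃ i, (a i) ⁻¹' Set.Ioi u) = f ⁻¹' Set.Ioi u := by
    intro u
    ext x
    simp only [Set.mem_iUnion, Set.mem_preimage, Set.mem_Ioi]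
    constructor
    · rintro ⟨i, hi⟩; exact lt_of_lt_of_le hi ((hle i) x)
    · intro hx
      exact ((hlim x).eventually (eventually_gt_nhds hx)).exists
  set g : ℝ → ℝ := fun s => μ (f ⁻¹' Set.Ioi (s - M)) with hgdef
  set η := ε / 2 with hηdef
  have hη : 0 < η := by rw [hηdef]; linarith
  set n := ⌈2 * M / η⌉₊ + 1 with hndef
  have hT : 2 * M < (n : ℝ) * η := by
    have h1 : 2 * M / η ≤ (⌈2 * M / η⌉₊ : ℝ) := Nat.le_ceil _
    have h2 : 2 * M = (2 * M / η) * η := by field_simp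
    have h3 : (2 * M / η) * η ≤ (⌈2 * M / η⌉₊ : ℝ) * η :=
      mul_le_mul_of_nonneg_right h1 hη.le
    have h4 : ((n : ℝ)) = (⌈2 * M / η⌉₊ : ℝ) + 1 := by rw [hndef]; push_cast; ring
    rw [h4]
    nlinarith
  set T := (n : ℝ) * η with hTdef
  have hT0 : 0 < T := lt_trans (by linarith) hT
  set ε' := ε / (2 * (T + 1)) with hε'def
  have hε' : 0 < ε' := by rw [hε'def]; positivity
  have hchoice : ∀ k : ℕ, ∃ i, i₀ ≤ i ∧
      g ((k : ℝ) * η) - ε' ≤ μ ((a i) ⁻¹' Set.Ioi ((k : ℝ) * η - M)) := by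
    intro k
    have hlt : g ((k : ℝ) * η) - ε' < μ (⋃ i, (a i) ⁻¹' Set.Ioi ((k : ℝ) * η - M)) := by
      rw [hunion]
      have hgr : g ((k : ℝ) * η) = μ (f ⁻¹' Set.Ioi ((k : ℝ) * η - M)) := rfl
      linarith
    obtain ⟨i, hi⟩ := QMAux.qm_sup hμ (fun i => (a i) ⁻¹' Set.Ioi ((k : ℝ) * η - M))
      (fun i => isOpen_Ioi.preimage (a i).continuous)
      (fun i j hij x hx => lt_of_lt_of_le hx ((hmono hij) x))
      hlt
    obtain ⟨j, hj1, hj2⟩ := exists_ge_ge i₀ i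
    refine ⟨j, hj1, ?_⟩
    have hm : μ ((a i) ⁻¹' Set.Ioi ((k : ℝ) * η - M))
        ≤ μ ((a j) ⁻¹' Set.Ioi ((k : ℝ) * η - M)) :=
      QMAux.qm_mono_oo hμ (isOpen_Ioi.preimage (a i).continuous)
        (isOpen_Ioi.preimage (a j).continuous)
        (fun x hx => lt_of_lt_of_le hx ((hmono hj2) x))
    linarith
  choose idx hidx1 hidx2 using hchoice
  obtain ⟨i₁, hi₁⟩ := ((Finset.range (n + 1)).image idx).exists_le
  obtain ⟨j, hj1, hj2⟩ := exists_ge_ge i₀ i₁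
  set gj : ℝ → ℝ := fun s => μ ((a j) ⁻¹' Set.Ioi (s - M)) with hgjdef
  have hMj : ‖a j‖ ≤ M := hMa j hj1
  have hjk : ∀ k : ℕ, k ≤ n → g ((k : ℝ) * η) - ε' ≤ gj ((k : ℝ) * η) := by
    intro k hk
    have h1 := hidx2 k
    have h2 : idx k ≤ j := le_trans (hi₁ _ (Finset.mem_image_of_mem idx
      (Finset.mem_range.2 (Nat.lt_succ_of_le hk)))) hj2
    have h3 : μ ((a (idx k)) ⁻¹' Set.Ioi ((k : ℝ) * η - M))
        ≤ μ ((a j) ⁻¹' Set.Ioi ((k : ℝ) * η - M)) :=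
      QMAux.qm_mono_oo hμ (isOpen_Ioi.preimage (a (idx k)).continuous)
        (isOpen_Ioi.preimage (a j).continuous)
        (fun x hx => lt_of_lt_of_le hx ((hmono h2) x))
    have h4 : gj ((k : ℝ) * η) = μ ((a j) ⁻¹' Set.Ioi ((k : ℝ) * η - M)) := rfl
    linarith
  -- record all needed facts, then make the local definitions opaque
  have hganti : Antitone g := by rw [hgdef]; exact QMAux.integrand_anti hμ f M
  have hgjanti : Antitone gj := by rw [hgjdef]; exact QMAux.integrand_anti hμ (a j) M
  have hgnn : ∀ s, 0 ≤ g s := fun s => by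
    rw [hgdef]; exact QMAux.integrand_nonneg hμ f M s
  have hgjnn : ∀ s, 0 ≤ gj s := fun s => by
    rw [hgjdef]; exact QMAux.integrand_nonneg hμ (a j) M s
  have hgle1 : ∀ s, g s ≤ 1 := fun s => by
    rw [hgdef]; exact QMAux.integrand_le_one hμ f M s
  have hgzero : ∀ s, 2 * M < s → g s = 0 := fun s hs => by
    rw [hgdef]; exact QMAux.integrand_zero hμ f hMf hs
  have hgint : MeasureTheory.IntegrableOn g (Set.Ioi (0 : ℝ)) := by
    rw [hgdef]; exact QMAux.integrand_integrableOn hμ f hMf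
  have hgjint : MeasureTheory.IntegrableOn gj (Set.Ioi (0 : ℝ)) := by
    rw [hgjdef]; exact QMAux.integrand_integrableOn hμ (a j) hMj
  have hqf : qint μ f = (∫ s in Set.Ioi (0 : ℝ), g s) - M := by
    rw [hgdef]; exact QMAux.qint_formula hμ f hMf
  have hqj : qint μ (a j) = (∫ s in Set.Ioi (0 : ℝ), gj s) - M := by
    rw [hgjdef]; exact QMAux.qint_formula hμ (a j) hMj
  clear_value g gj ε' T n η M
  clear hidx2 hidx1 hunion hgdef hgjdef hndef
  have hIocsub : ∀ k : ℕ, Set.Ioc ((k : ℝ) * η) (((k : ℝ) + 1) * η) ⊆ Set.Ioi 0 := by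
    intro k s hs
    have h0 : (0 : ℝ) ≤ (k : ℝ) * η := mul_nonneg (Nat.cast_nonneg k) hη.le
    exact lt_of_le_of_lt h0 hs.1
  have hkk1 : ∀ k : ℕ, (k : ℝ) * η ≤ ((k : ℝ) + 1) * η :=
    fun k => mul_le_mul_of_nonneg_right (by linarith) hη.le
  have hadj : ∀ h : ℝ → ℝ, MeasureTheory.IntegrableOn h (Set.Ioi (0 : ℝ)) →
      (∑ k ∈ Finset.range n, ∫ s in Set.Ioc ((k : ℝ) * η) (((k : ℝ) + 1) * η), h s)
        = ∫ s in Set.Ioc (0 : ℝ) T, h s := by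
    intro h hint
    have hii : ∀ k : ℕ, IntervalIntegrable h MeasureTheory.volume ((k : ℝ) * η)
        (((k + 1 : ℕ) : ℝ) * η) := by
      intro k
      rw [intervalIntegrable_iff]
      have hcast : ((k + 1 : ℕ) : ℝ) = (k : ℝ) + 1 := by push_cast; ring
      rw [hcast, Set.uIoc_of_le (hkk1 k)]
      exact hint.mono_set (hIocsub k)
    have hsum := intervalIntegral.sum_integral_adjacent_intervals
      (a := fun k : ℕ => (k : ℝ) * η) (μ := MeasureTheory.volume) (n := n)
      (fun k _ => hii k)
    simp only [Nat.cast_zero, zero_mul] at hsum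
    have heach : ∀ k : ℕ, (∫ s in ((k : ℝ) * η)..(((k + 1 : ℕ) : ℝ) * η), h s)
        = ∫ s in Set.Ioc ((k : ℝ) * η) (((k : ℝ) + 1) * η), h s := by
      intro k
      have hcast : ((k + 1 : ℕ) : ℝ) = (k : ℝ) + 1 := by push_cast; ring
      rw [hcast, intervalIntegral.integral_of_le (hkk1 k)]
    rw [Finset.sum_congr rfl (fun k _ => heach k)] at hsum
    have hn0' : (0:ℝ) ≤ (n : ℝ) * η :=
      mul_nonneg (Nat.cast_nonneg n) hη.le
    rw [hsum, intervalIntegral.integral_of_le hn0', hTdef]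
  have piece : ∀ k : ℕ, k < n →
      (∫ s in Set.Ioc ((k : ℝ) * η) (((k : ℝ) + 1) * η), g s)
        ≤ (∫ s in Set.Ioc ((k : ℝ) * η) (((k : ℝ) + 1) * η), gj s)
          + ((g ((k : ℝ) * η) - g (((k : ℝ) + 1) * η)) * η + ε' * η) := by
    intro k hk
    set c := g ((k : ℝ) * η) - g (((k : ℝ) + 1) * η) + ε' with hcdef
    have hbound : ∀ s ∈ Set.Ioc ((k : ℝ) * η) (((k : ℝ) + 1) * η), g s ≤ gj s + c := by
      intro s hs
      have h1 : g s ≤ g ((k : ℝ) * η) := hganti hs.1.le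
      have h2 : gj (((k : ℝ) + 1) * η) ≤ gj s := hgjanti hs.2
      have h3 := hjk (k + 1) (Nat.succ_le_of_lt hk)
      push_cast at h3
      rw [hcdef]
      linarith
    have hconst : MeasureTheory.IntegrableOn (fun _ => c)
        (Set.Ioc ((k : ℝ) * η) (((k : ℝ) + 1) * η)) :=
      (MeasureTheory.integrableOn_const_iff).2 (Or.inr measure_Ioc_lt_top)
    have hgj' := hgjint.mono_set (hIocsub k)
    have hint2 : MeasureTheory.IntegrableOn (fun s => gj s + c)
        (Set.Ioc ((k : ℝ) * η) (((k : ℝ) + 1) * η)) := hgj'.add hconst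
    have hmon := MeasureTheory.setIntegral_mono_on (hgint.mono_set (hIocsub k))
      hint2 measurableSet_Ioc hbound
    rw [MeasureTheory.integral_add hgj' hconst, MeasureTheory.setIntegral_const,
      smul_eq_mul] at hmon
    have hvol : MeasureTheory.volume.real (Set.Ioc ((k : ℝ) * η) (((k : ℝ) + 1) * η))
        = η := by
      have h5 : ((k : ℝ) + 1) * η - (k : ℝ) * η = η := by ring
      rw [Real.volume_real_Ioc, h5, max_eq_left hη.le]
    rw [hvol] at hmon
    have hrw : (g ((k : ℝ) * η) - g (((k : ℝ) + 1) * η)) * η + ε' * η = η * c := by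
      rw [hcdef]; ring
    rw [hrw]
    linarith
  have hgIoi : (∫ s in Set.Ioi (0 : ℝ), g s) = ∫ s in Set.Ioc (0 : ℝ) T, g s := by
    have hzero : Set.EqOn g (fun _ => (0 : ℝ)) (Set.Ioi T) := fun s hs =>
      hgzero s (lt_trans hT hs)
    have hun : Set.Ioc (0 : ℝ) T ∪ Set.Ioi T = Set.Ioi 0 := Set.Ioc_union_Ioi_eq_Ioi hT0.le
    rw [← hun, MeasureTheory.setIntegral_union (Set.Ioc_disjoint_Ioi le_rfl)
      measurableSet_Ioi (hgint.mono_set (by rw [← hun]; exact Set.subset_union_left))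
      (hgint.mono_set (by rw [← hun]; exact Set.subset_union_right)),
      MeasureTheory.setIntegral_congr_fun measurableSet_Ioi hzero]
    simp
  have hgjIoc : (∫ s in Set.Ioc (0 : ℝ) T, gj s) ≤ ∫ s in Set.Ioi (0 : ℝ), gj s := by
    refine MeasureTheory.setIntegral_mono_set hgjint ?_ ?_
    · exact Filter.Eventually.of_forall fun s => hgjnn s
    · exact Filter.Eventually.of_forall fun x hx => hx.1
  have hsumg := hadj g hgint
  have hsumgj := hadj gj hgjint
  have htelescope : (∑ k ∈ Finset.range n,
      ((g ((k : ℝ) * η) - g (((k : ℝ) + 1) * η)) * η + ε' * η))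
      = (g 0 - g T) * η + (n : ℝ) * (ε' * η) := by
    rw [Finset.sum_add_distrib, Finset.sum_const, Finset.card_range, nsmul_eq_mul,
      ← Finset.sum_mul]
    have hts : (∑ k ∈ Finset.range n, (g ((k : ℝ) * η) - g (((k : ℝ) + 1) * η)))
        = g 0 - g T := by
      have h6 := Finset.sum_range_sub' (fun k : ℕ => g ((k : ℝ) * η)) n
      simp only [Nat.cast_zero, zero_mul] at h6
      rw [hTdef, ← h6]
      refine Finset.sum_congr rfl fun k _ => ?_
      have hcast : ((k + 1 : ℕ) : ℝ) = (k : ℝ) + 1 := by push_cast; ring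
      rw [hcast]
    rw [hts]
  have hmain : (∫ s in Set.Ioc (0 : ℝ) T, g s)
      ≤ (∫ s in Set.Ioc (0 : ℝ) T, gj s) + ((g 0 - g T) * η + (n : ℝ) * (ε' * η)) := by
    rw [← hsumg, ← hsumgj, ← htelescope, ← Finset.sum_add_distrib]
    exact Finset.sum_le_sum fun k hk => piece k (Finset.mem_range.1 hk)
  have hg01 : g 0 ≤ 1 := hgle1 0
  have hgT0 : 0 ≤ g T := hgnn T
  have herr1 : (g 0 - g T) * η ≤ η := by nlinarith
  have herr2 : (n : ℝ) * (ε' * η) ≤ ε / 2 := by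
    have h1 : (n : ℝ) * (ε' * η) = T * ε' := by rw [hTdef]; ring
    have h2 : T * (ε / (2 * (T + 1))) = (T * ε) / (2 * (T + 1)) := by ring
    rw [h1, hε'def, h2, div_le_div_iff₀ (by linarith) (by norm_num : (0:ℝ) < 2)]
    nlinarith [hT0.le, hε.le]
  have hjS : qint μ (a j) ≤ ⨆ i, qint μ (a i) := le_ciSup hbdd j
  have hηε : η ≤ ε / 2 := by rw [hηdef]
  calc qint μ f = (∫ s in Set.Ioi (0 : ℝ), g s) - M := hqf
    _ = (∫ s in Set.Ioc (0 : ℝ) T, g s) - M := by rw [hgIoi]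
    _ ≤ (∫ s in Set.Ioc (0 : ℝ) T, gj s) + ((g 0 - g T) * η + (n : ℝ) * (ε' * η)) - M := by
        linarith
    _ ≤ (∫ s in Set.Ioi (0 : ℝ), gj s) + ε - M := by linarith
    _ = qint μ (a j) + ε := by rw [hqj]; ring
    _ ≤ (⨆ i, qint μ (a i)) + ε := by linarith
end

section
/- If K ≤ a ≤ U in the sense that a ∈ C_b(X) takes values in [0,1], a = 1 on the compact set K and supp(a) ⊆ the open set U, then for any quasi-measure μ on X: μ(K) ≤ μ(a) ≤ μ(U), where μ(a) is the quasi-integral. -/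
open Set MeasureTheory BoundedContinuousFunction Filter Topology

section QM
variable {X : Type*} [TopologicalSpace X] {μ : Set X → ℝ} (hμ : IsQuasiMeasure μ)
include hμ

omit hμ in
lemma IsImage.compl {A : Set X} (h : IsImage A) : IsImage Aᶜ :=
  h.elim (fun h => Or.inr h.isClosed_compl) (fun h => Or.inl h.isOpen_compl)

lemma qm_empty : μ ∅ = 0 := by
  have := hμ.additive ∅ ∅ (Or.inl isOpen_empty) (Or.inl isOpen_empty)
    (by rw [union_empty]; exact Or.inl isOpen_empty) (disjoint_bot_left)
  simp at this; linarith

lemma qm_compl {A : Set X} (hA : IsImage A) : μ A + μ Aᶜ = 1 := by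
  have := hμ.additive A Aᶜ hA hA.compl (by rw [union_compl_self]; exact Or.inl isOpen_univ)
    disjoint_compl_right
  rw [union_compl_self, hμ.normalized] at this
  linarith

lemma qm_le_one {A : Set X} (hA : IsImage A) : μ A ≤ 1 := by
  have h1 := qm_compl hμ hA
  have h2 := hμ.nonneg _ hA.compl
  linarith

lemma qm_cpt_le_open {K U : Set X} (hK : IsCompact K) (hU : IsOpen U) (hKU : K ⊆ U) :
    μ K ≤ μ U :=
  (hμ.regular U hU).1 ⟨K, hK, hKU, rfl⟩

lemma qm_mono_oo {V U : Set X} (hV : IsOpen V) (hU : IsOpen U) (h : V ⊆ U) : μ V ≤ μ U := by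
  refine (hμ.regular V hV).2 ?_
  rintro r ⟨K, hK, hKV, rfl⟩
  exact qm_cpt_le_open hμ hK hU (hKV.trans h)

lemma qm_closed_le_open {C V : Set X} (hC : IsClosed C) (hV : IsOpen V) (h : C ⊆ V) :
    μ C ≤ μ V := by
  have hadd := hμ.additive C (V \ C) (Or.inr hC) (Or.inl (hV.sdiff hC))
    (by rw [union_diff_cancel h]; exact Or.inl hV) disjoint_sdiff_self_right
  rw [union_diff_cancel h] at hadd
  have := hμ.nonneg _ (Or.inl (hV.sdiff hC) : IsImage (V \ C))
  linarith

lemma qm_mono_cc {C D : Set X} (hC : IsClosed C) (hD : IsClosed D) (h : C ⊆ D) :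
    μ C ≤ μ D := by
  have h1 := qm_compl hμ (Or.inr hC : IsImage C)
  have h2 := qm_compl hμ (Or.inr hD : IsImage D)
  have := qm_mono_oo hμ hD.isOpen_compl hC.isOpen_compl (compl_subset_compl.2 h)
  linarith

lemma qm_open_le_closed [T2Space X] {V C : Set X} (hV : IsOpen V) (hC : IsClosed C)
    (h : V ⊆ C) : μ V ≤ μ C := by
  refine (hμ.regular V hV).2 ?_
  rintro r ⟨K, hK, hKV, rfl⟩
  exact qm_mono_cc hμ hK.isClosed hC (hKV.trans h)

lemma qm_finset_union {ι : Type*} [DecidableEq ι] (s : Finset ι) (V : ι → Set X)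
    (hV : ∀ i ∈ s, IsOpen (V i))
    (hdisj : (s : Set ι).Pairwise (fun i j => Disjoint (V i) (V j))) :
    μ (⋃ i ∈ s, V i) = ∑ i ∈ s, μ (V i) := by
  classical
  induction s using Finset.induction_on with
  | empty => simpa using qm_empty hμ
  | @insert i s hnm ih =>
    rw [Finset.set_biUnion_insert, Finset.sum_insert hnm]
    have hVi : IsOpen (V i) := hV i (Finset.mem_insert_self i s)
    have hVs : IsOpen (⋃ j ∈ s, V j) :=
      isOpen_biUnion (fun j hj => hV j (Finset.mem_insert_of_mem hj))
    have hd : Disjoint (V i) (⋃ j ∈ s, V j) := by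
      rw [Set.disjoint_iUnion₂_right]
      intro j hj
      exact hdisj (Finset.mem_insert_self i s) (Finset.mem_insert_of_mem hj)
        (fun h => hnm (h ▸ hj))
    rw [hμ.additive _ _ (Or.inl hVi) (Or.inl hVs) (Or.inl (hVi.union hVs)) hd,
      ih (fun j hj => hV j (Finset.mem_insert_of_mem hj))
        (hdisj.mono (Finset.coe_subset.2 (Finset.subset_insert i s)))]

omit hμ

lemma merge_intervals : ∀ n : ℕ, ∀ s : Finset (ℝ × ℝ), s.card ≤ n →
    ∃ t : Finset (ℝ × ℝ),
      ((t : Set (ℝ × ℝ)).Pairwise fun p q => Disjoint (Ioo p.1 p.2) (Ioo q.1 q.2)) ∧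
      (⋃ p ∈ t, Ioo p.1 p.2) = ⋃ p ∈ s, Ioo p.1 p.2 := by
  intro n
  induction n with
  | zero =>
    intro s hs
    rw [Nat.le_zero, Finset.card_eq_zero] at hs
    exact ⟨∅, by simp [hs], by simp [hs]⟩
  | succ n ih =>
    intro s hs
    by_cases hp : (s : Set (ℝ × ℝ)).Pairwise fun p q => Disjoint (Ioo p.1 p.2) (Ioo q.1 q.2)
    · exact ⟨s, hp, rfl⟩
    · rw [Set.Pairwise] at hp
      push_neg at hp
      obtain ⟨x, hx, y, hy, hxy, hnd⟩ := hp
      rw [Set.not_disjoint_iff] at hnd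
      obtain ⟨z, hz1, hz2⟩ := hnd
      have hmerge : Ioo x.1 x.2 ∪ Ioo y.1 y.2 = Ioo (min x.1 y.1) (max x.2 y.2) :=
        Ioo_union_Ioo' (lt_of_le_of_lt (le_of_lt hz2.1) hz1.2)
          (lt_of_le_of_lt (le_of_lt hz1.1) hz2.2)
      classical
      have hxs : x ∈ s := Finset.mem_coe.1 hx
      have hys : y ∈ s := Finset.mem_coe.1 hy
      have hy' : y ∈ s.erase x := Finset.mem_erase.2 ⟨fun h => hxy h.symm, hys⟩
      set s₀ := (s.erase x).erase y with hs₀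
      have hrecon : s = insert x (insert y s₀) := by
        rw [hs₀, Finset.insert_erase hy', Finset.insert_erase hxs]
      have hcard : (insert (min x.1 y.1, max x.2 y.2) s₀).card ≤ n := by
        have h1 : s₀.card + 2 ≤ s.card := by
          rw [hrecon]
          rw [Finset.card_insert_of_notMem (by simp [hs₀, hxy]), Finset.card_insert_of_notMem
            (Finset.notMem_erase _ _)]
        have := Finset.card_insert_le (min x.1 y.1, max x.2 y.2) s₀
        omega
      obtain ⟨t, ht1, ht2⟩ := ih _ hcard
      refine ⟨t, ht1, ?_⟩
      rw [ht2]
      conv_rhs => rw [hrecon]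
      rw [Finset.set_biUnion_insert, Finset.set_biUnion_insert, Finset.set_biUnion_insert,
        ← Set.union_assoc, hmerge]

lemma cover_by_intervals {C A : Set ℝ} (hC : IsCompact C) (hA : IsOpen A) (hCA : C ⊆ A) :
    ∃ s : Finset (ℝ × ℝ),
      ((s : Set (ℝ × ℝ)).Pairwise fun p q => Disjoint (Ioo p.1 p.2) (Ioo q.1 q.2)) ∧
      C ⊆ (⋃ p ∈ s, Ioo p.1 p.2) ∧ (⋃ p ∈ s, Ioo p.1 p.2) ⊆ A := by
  classical
  have hball : ∀ x : C, ∃ p : ℝ × ℝ, (x : ℝ) ∈ Ioo p.1 p.2 ∧ Ioo p.1 p.2 ⊆ A := by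
    rintro ⟨x, hx⟩
    obtain ⟨ε, hε, hball⟩ := Metric.isOpen_iff.1 hA x (hCA hx)
    refine ⟨(x - ε, x + ε), by simp [hε], ?_⟩
    rwa [← Real.ball_eq_Ioo]
  choose g hg1 hg2 using hball
  have hcover : C ⊆ ⋃ x : C, Ioo (g x).1 (g x).2 := fun x hx =>
    Set.mem_iUnion.2 ⟨⟨x, hx⟩, hg1 ⟨x, hx⟩⟩
  obtain ⟨s, hsub⟩ := hC.elim_finite_subcover (fun x : C => Ioo (g x).1 (g x).2)
    (fun _ => isOpen_Ioo) hcover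
  obtain ⟨t, ht1, ht2⟩ := merge_intervals (s.image g).card (s.image g) le_rfl
  refine ⟨t, ht1, ?_, ?_⟩
  · rw [ht2]
    refine hsub.trans ?_
    intro z hz
    obtain ⟨x, hxs, hxz⟩ := Set.mem_iUnion₂.1 hz
    exact Set.mem_iUnion₂.2 ⟨g x, Finset.mem_image_of_mem g hxs, hxz⟩
  · rw [ht2]
    intro z hz
    obtain ⟨p, hps, hpz⟩ := Set.mem_iUnion₂.1 hz
    obtain ⟨x, _, rfl⟩ := Finset.mem_image.1 hps
    exact hg2 x hpz

end QM

section Exists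
variable {X : Type*} [TopologicalSpace X] [T2Space X] {μ : Set X → ℝ}

lemma qm_exists_measure (hμ : IsQuasiMeasure μ) (a : X →ᵇ ℝ) :
    ∃ ν : MeasureTheory.Measure ℝ, MeasureTheory.IsProbabilityMeasure ν ∧
      ∀ A : Set ℝ, IsImage A → ν A = ENNReal.ofReal (μ (a ⁻¹' A)) := by
  classical
  have hclosedIic : ∀ t : ℝ, IsClosed (a ⁻¹' Iic t) := fun t => isClosed_Iic.preimage a.continuous
  have hopenIoi : ∀ t : ℝ, IsOpen (a ⁻¹' Ioi t) := fun t => isOpen_Ioi.preimage a.continuous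
  have hopenIio : ∀ t : ℝ, IsOpen (a ⁻¹' Iio t) := fun t => isOpen_Iio.preimage a.continuous
  have hmono : Monotone (fun t : ℝ => μ (a ⁻¹' Iic t)) := fun s t hst =>
    qm_mono_cc hμ (hclosedIic s) (hclosedIic t) (preimage_mono (Iic_subset_Iic.2 hst))
  have hcomplIic : ∀ t : ℝ, μ (a ⁻¹' Iic t) = 1 - μ (a ⁻¹' Ioi t) := by
    intro t
    have h := qm_compl hμ (Or.inr (hclosedIic t) : IsImage (a ⁻¹' Iic t))
    rw [← preimage_compl, compl_Iic] at h
    linarith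
  have hkey : ∀ x : ℝ, ∀ ε > (0:ℝ), ∃ s > x, μ (a ⁻¹' Iic s) < μ (a ⁻¹' Iic x) + ε := by
    intro x ε hε
    obtain ⟨r, hrmem, hrgt, -⟩ := (hμ.regular _ (hopenIoi x)).exists_between
      (show μ (a ⁻¹' Ioi x) - ε < μ (a ⁻¹' Ioi x) by linarith)
    obtain ⟨L, hL, hLsub, rfl⟩ := hrmem
    rcases L.eq_empty_or_nonempty with hLe | hLne
    · refine ⟨x + 1, by linarith, ?_⟩
      have h0 : μ L = 0 := by rw [hLe]; exact qm_empty hμ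
      have h1 : 0 ≤ μ (a ⁻¹' Ioi (x+1)) := hμ.nonneg _ (Or.inl (hopenIoi (x+1)))
      rw [hcomplIic, hcomplIic]
      linarith [h0 ▸ hrgt]
    · obtain ⟨y, hyL, hymin⟩ := hL.exists_isMinOn hLne a.continuous.continuousOn
      have hxy : x < a y := hLsub hyL
      refine ⟨(x + a y) / 2, by linarith, ?_⟩
      have hLsub2 : L ⊆ a ⁻¹' Ioi ((x + a y) / 2) := fun w hw => by
        have := hymin hw
        simp only [mem_preimage, mem_Ioi]
        have : a y ≤ a w := hymin hw
        linarith
      have h2 : μ L ≤ μ (a ⁻¹' Ioi ((x + a y) / 2)) :=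
        qm_cpt_le_open hμ hL (hopenIoi _) hLsub2
      rw [hcomplIic, hcomplIic]
      linarith
  set F : StieltjesFunction ℝ :=
    { toFun := fun t : ℝ => μ (a ⁻¹' Iic t)
      mono' := hmono
      right_continuous' := by
        intro x
        refine tendsto_order.2 ⟨fun b hb => ?_, fun b hb => ?_⟩
        · exact Filter.eventually_of_mem self_mem_nhdsWithin
            (fun t ht => lt_of_lt_of_le hb (hmono ht))
        · obtain ⟨s, hs, hFs⟩ := hkey x (b - μ (a ⁻¹' Iic x)) (by simpa using hb)
          refine Filter.eventually_of_mem (Ico_mem_nhdsGE hs)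
            (fun t ht => lt_of_le_of_lt (hmono (le_of_lt ht.2)) (by linarith)) }
    with hF
  have hFval : ∀ t : ℝ, F t = μ (a ⁻¹' Iic t) := fun t => rfl
  have hbot : Tendsto F atBot (𝓝 0) := by
    refine Tendsto.congr' ?_ tendsto_const_nhds
    filter_upwards [eventually_le_atBot (-‖a‖ - 1)] with t ht
    have : a ⁻¹' Iic t = ∅ := by
      ext x
      simp only [mem_preimage, mem_Iic, mem_empty_iff_false, iff_false, not_le]
      have := (abs_le.1 (a.norm_coe_le_norm x)).1
      linarith
    rw [hFval, this, qm_empty hμ]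
  have htop : Tendsto F atTop (𝓝 1) := by
    refine Tendsto.congr' ?_ tendsto_const_nhds
    filter_upwards [eventually_ge_atTop ‖a‖] with t ht
    have : a ⁻¹' Iic t = univ := by
      ext x
      simp only [mem_preimage, mem_Iic, mem_univ, iff_true]
      have := (abs_le.1 (a.norm_coe_le_norm x)).2
      linarith
    rw [hFval, this, hμ.normalized]
  have hprob : MeasureTheory.IsProbabilityMeasure F.measure :=
    F.isProbabilityMeasure hbot htop
  have hleft : ∀ q : ℝ, Function.leftLim F q = μ (a ⁻¹' Iio q) := by
    intro q
    rw [F.mono.leftLim_eq_sSup (x := q)]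
    refine IsLUB.csSup_eq ?_ ((nonempty_Iio (a := q)).image F)
    constructor
    · rintro r ⟨s, hs, rfl⟩
      exact qm_closed_le_open hμ (hclosedIic s) (hopenIio q)
        (preimage_mono (Iic_subset_Iio.2 hs))
    · intro b hb
      have hb0 : F (q - 1) ≤ b := hb ⟨q - 1, by simp, rfl⟩
      refine (hμ.regular _ (hopenIio q)).2 ?_
      rintro r ⟨L, hL, hLsub, rfl⟩
      rcases L.eq_empty_or_nonempty with hLe | hLne
      · rw [hLe, qm_empty hμ]
        have := hμ.nonneg _ (Or.inr (hclosedIic (q-1)) : IsImage (a ⁻¹' Iic (q-1)))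
        calc (0:ℝ) ≤ F (q-1) := this
        _ ≤ b := hb0
      · obtain ⟨y, hyL, hymax⟩ := hL.exists_isMaxOn hLne a.continuous.continuousOn
        have hyq : a y < q := hLsub hyL
        have hsub : L ⊆ a ⁻¹' Iic (a y) := fun w hw => hymax hw
        calc μ L ≤ μ (a ⁻¹' Iic (a y)) :=
              qm_mono_cc hμ hL.isClosed (hclosedIic _) hsub
          _ ≤ b := hb ⟨a y, hyq, rfl⟩
  have hIoo : ∀ p q : ℝ, F.measure (Ioo p q) = ENNReal.ofReal (μ (a ⁻¹' Ioo p q)) := by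
    intro p q
    rw [StieltjesFunction.measure_Ioo, hleft, hFval]
    rcases le_or_gt q p with hqp | hpq
    · have h1 : μ (a ⁻¹' Iio q) ≤ μ (a ⁻¹' Iic p) :=
        qm_open_le_closed hμ (hopenIio q) (hclosedIic p)
          (preimage_mono (fun z hz => le_of_lt (lt_of_lt_of_le hz hqp)))
      rw [Ioo_eq_empty (not_lt.2 hqp), preimage_empty, qm_empty hμ, ENNReal.ofReal_zero]
      exact ENNReal.ofReal_eq_zero.2 (by linarith)
    · have hadd := hμ.additive (a ⁻¹' Iic p) (a ⁻¹' Ioo p q)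
        (Or.inr (hclosedIic p)) (Or.inl (isOpen_Ioo.preimage a.continuous))
        (by rw [← preimage_union, Iic_union_Ioo_eq_Iio hpq]; exact Or.inl (hopenIio q))
        (Disjoint.preimage _ (by
          rw [Set.disjoint_left]
          rintro z hz1 hz2
          exact absurd hz2.1 (not_lt.2 hz1)))
      rw [← preimage_union, Iic_union_Ioo_eq_Iio hpq] at hadd
      rw [hadd]
      congr 1
      ring
  have hbiUnion : ∀ s : Finset (ℝ × ℝ),
      ((s : Set (ℝ × ℝ)).Pairwise fun p q => Disjoint (Ioo p.1 p.2) (Ioo q.1 q.2)) →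
      F.measure (⋃ p ∈ s, Ioo p.1 p.2) = ENNReal.ofReal (μ (a ⁻¹' ⋃ p ∈ s, Ioo p.1 p.2)) := by
    intro s hdisj
    rw [MeasureTheory.measure_biUnion_finset hdisj (fun p _ => measurableSet_Ioo)]
    rw [preimage_iUnion₂, qm_finset_union hμ s _
      (fun p _ => isOpen_Ioo.preimage a.continuous)
      (hdisj.mono' (fun p q h => h.preimage a))]
    rw [ENNReal.ofReal_sum_of_nonneg
      (fun p _ => hμ.nonneg _ (Or.inl (isOpen_Ioo.preimage a.continuous)))]
    exact Finset.sum_congr rfl (fun p _ => hIoo p.1 p.2)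
  haveI := hprob
  have hopen : ∀ A : Set ℝ, IsOpen A → F.measure A = ENNReal.ofReal (μ (a ⁻¹' A)) := by
    intro A hA
    have hWgen : ∀ C : Set ℝ, IsCompact C → C ⊆ A →
        ∃ W : Set ℝ, IsOpen W ∧ C ⊆ W ∧ W ⊆ A ∧
          F.measure W = ENNReal.ofReal (μ (a ⁻¹' W)) := by
      intro C hC hCA
      obtain ⟨s, hdisj, hCs, hsA⟩ := cover_by_intervals hC hA hCA
      exact ⟨_, isOpen_biUnion (fun p _ => isOpen_Ioo), hCs, hsA, hbiUnion s hdisj⟩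
    refine le_antisymm (le_of_forall_lt (fun r hr => ?_)) ?_
    · obtain ⟨K, hKA, hKcpt, hrK⟩ :=
        MeasureTheory.Measure.Regular.innerRegular (μ := F.measure) hA r hr
      obtain ⟨W, hWopen, hKW, hWA, hWeq⟩ := hWgen K hKcpt hKA
      calc r < F.measure K := hrK
        _ ≤ F.measure W := measure_mono hKW
        _ = ENNReal.ofReal (μ (a ⁻¹' W)) := hWeq
        _ ≤ ENNReal.ofReal (μ (a ⁻¹' A)) := ENNReal.ofReal_le_ofReal
            (qm_mono_oo hμ (hWopen.preimage a.continuous) (hA.preimage a.continuous)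
              (preimage_mono hWA))
    · have htoReal : μ (a ⁻¹' A) ≤ (F.measure A).toReal := by
        refine (hμ.regular _ (hA.preimage a.continuous)).2 ?_
        rintro r ⟨L, hL, hLsub, rfl⟩
        obtain ⟨W, hWopen, hCW, hWA, hWeq⟩ := hWgen (a '' L) (hL.image a.continuous)
          (image_subset_iff.2 hLsub)
        have hWpre : IsOpen (a ⁻¹' W) := hWopen.preimage a.continuous
        have hLW : L ⊆ a ⁻¹' W := fun x hx => hCW (mem_image_of_mem a hx)
        calc μ L ≤ μ (a ⁻¹' W) := qm_cpt_le_open hμ hL hWpre hLW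
          _ = (F.measure W).toReal := by
              rw [hWeq, ENNReal.toReal_ofReal (hμ.nonneg _ (Or.inl hWpre))]
          _ ≤ (F.measure A).toReal :=
              ENNReal.toReal_mono (measure_ne_top _ _) (measure_mono hWA)
      calc ENNReal.ofReal (μ (a ⁻¹' A)) ≤ ENNReal.ofReal (F.measure A).toReal :=
            ENNReal.ofReal_le_ofReal htoReal
        _ = F.measure A := ENNReal.ofReal_toReal (measure_ne_top _ _)
  refine ⟨F.measure, hprob, ?_⟩
  rintro A (hA | hA)
  · exact hopen A hA
  · have h1 : F.measure Aᶜ = ENNReal.ofReal (μ (a ⁻¹' Aᶜ)) := hopen Aᶜ hA.isOpen_compl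
    have h2 : μ (a ⁻¹' A) = 1 - μ (a ⁻¹' Aᶜ) := by
      have h := qm_compl hμ (Or.inr (hA.preimage a.continuous) : IsImage (a ⁻¹' A))
      rw [← preimage_compl] at h
      linarith
    have hcm : F.measure A = 1 - F.measure Aᶜ := by
      have h := MeasureTheory.measure_compl (hA.measurableSet.compl)
        (MeasureTheory.measure_ne_top F.measure Aᶜ)
      rw [compl_compl, measure_univ] at h
      exact h
    rw [hcm, h1, h2, ENNReal.ofReal_sub _
      (hμ.nonneg _ (Or.inl (hA.isOpen_compl.preimage a.continuous)))]
    simp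
end Exists

/-- if `K ≤ a ≤ U` then `μ(K) ≤ μ(a) ≤ μ(U)`. -/
theorem quasiIntegral_squeeze {X : Type*} [TopologicalSpace X] [T2Space X]
    (μ : Set X → ℝ) (hμ : IsQuasiMeasure μ) (a : X →ᵇ ℝ) (K U : Set X)
    (hK : IsCompact K) (hU : IsOpen U)
    (h01 : ∀ x, a x ∈ Set.Icc (0 : ℝ) 1)
    (hK1 : ∀ x ∈ K, a x = 1)
    (hsupp : tsupport (⇑a) ⊆ U) :
    μ K ≤ qint μ a ∧ qint μ a ≤ μ U := by
  have hex : ∃ ν : MeasureTheory.Measure ℝ, MeasureTheory.IsProbabilityMeasure ν ∧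
      ∀ A : Set ℝ, IsImage A → ν A = ENNReal.ofReal (μ (a ⁻¹' A)) :=
    qm_exists_measure hμ a
  have hqint : qint μ a = ∫ t, t ∂ hex.choose := by
    rw [qint, dif_pos hex]
  obtain ⟨hprob, hν⟩ := hex.choose_spec
  set ν := hex.choose with hνdef
  haveI := hprob
  -- ν is concentrated on [0,1]
  have hcompl : ν ((Icc (0:ℝ) 1)ᶜ) = 0 := by
    rw [hν _ (Or.inl isClosed_Icc.isOpen_compl)]
    have : a ⁻¹' (Icc (0:ℝ) 1)ᶜ = ∅ := by
      ext x
      simp only [mem_preimage, mem_compl_iff, mem_empty_iff_false, iff_false, not_not]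
      exact h01 x
    rw [this, qm_empty hμ, ENNReal.ofReal_zero]
  have hae : ∀ᵐ t ∂ν, t ∈ Icc (0:ℝ) 1 := by
    rw [MeasureTheory.ae_iff]
    exact hcompl
  set g : ℝ → ℝ := fun t => max 0 (min t 1) with hg
  have hgcont : Continuous g := continuous_const.max (continuous_id.min continuous_const)
  have hgint : MeasureTheory.Integrable g ν := by
    refine (MeasureTheory.integrable_const (1:ℝ)).mono' hgcont.aestronglyMeasurable
      (Filter.Eventually.of_forall fun t => ?_)
    rw [Real.norm_eq_abs, abs_le]
    constructor
    · have : (0:ℝ) ≤ max 0 (min t 1) := le_max_left _ _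
      linarith
    · exact max_le zero_le_one (min_le_right _ _)
  have hid : (fun t : ℝ => t) =ᵐ[ν] g := by
    filter_upwards [hae] with t ht
    rw [hg]
    simp only
    rw [min_eq_left ht.2, max_eq_right ht.1]
  have hqg : qint μ a = ∫ t, g t ∂ν := by
    rw [hqint, MeasureTheory.integral_congr_ae hid]
  constructor
  · -- lower bound
    set ind1 : ℝ → ℝ := ({1} : Set ℝ).indicator (fun _ => (1:ℝ)) with hind1
    have hint1 : MeasureTheory.Integrable ind1 ν :=
      (MeasureTheory.integrable_const (1:ℝ)).indicator (measurableSet_singleton 1)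
    have hle : ∀ t, ind1 t ≤ g t := by
      intro t
      rw [hind1]
      by_cases ht : t = (1:ℝ)
      · subst ht
        simp [hg]
      · rw [Set.indicator_of_notMem (by simpa using ht)]
        exact le_max_left _ _
    have h1 : ∫ t, ind1 t ∂ν ≤ ∫ t, g t ∂ν :=
      MeasureTheory.integral_mono hint1 hgint hle
    have h2 : ∫ t, ind1 t ∂ν = (ν {1}).toReal := by
      rw [hind1, MeasureTheory.integral_indicator_const (1:ℝ) (measurableSet_singleton (1:ℝ))]
      simp
      rfl
    have h3 : (ν {(1:ℝ)}).toReal = μ (a ⁻¹' {1}) := by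
      rw [hν _ (Or.inr isClosed_singleton), ENNReal.toReal_ofReal
        (hμ.nonneg _ (Or.inr (isClosed_singleton.preimage a.continuous)))]
    have h4 : μ K ≤ μ (a ⁻¹' {1}) :=
      qm_mono_cc hμ hK.isClosed (isClosed_singleton.preimage a.continuous)
        (fun x hx => hK1 x hx)
    rw [hqg]
    calc μ K ≤ μ (a ⁻¹' {1}) := h4
      _ = (ν {(1:ℝ)}).toReal := h3.symm
      _ = ∫ t, ind1 t ∂ν := h2.symm
      _ ≤ ∫ t, g t ∂ν := h1
  · -- upper bound
    set ind2 : ℝ → ℝ := (Ioi (0:ℝ)).indicator (fun _ => (1:ℝ)) with hind2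
    have hint2 : MeasureTheory.Integrable ind2 ν :=
      (MeasureTheory.integrable_const (1:ℝ)).indicator measurableSet_Ioi
    have hle : ∀ t, g t ≤ ind2 t := by
      intro t
      rw [hind2, hg]
      simp only
      rcases lt_or_ge 0 t with ht | ht
      · rw [Set.indicator_of_mem (by simpa using ht)]
        exact max_le zero_le_one (min_le_right _ _)
      · rw [Set.indicator_of_notMem (by simpa using ht),
          max_eq_left (le_trans (min_le_left _ _) ht)]
    have h1 : ∫ t, g t ∂ν ≤ ∫ t, ind2 t ∂ν :=
      MeasureTheory.integral_mono hgint hint2 hle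
    have h2 : ∫ t, ind2 t ∂ν = (ν (Ioi 0)).toReal := by
      rw [hind2, MeasureTheory.integral_indicator_const (1:ℝ) measurableSet_Ioi]
      simp
      rfl
    have h3 : (ν (Ioi (0:ℝ))).toReal = μ (a ⁻¹' Ioi 0) := by
      rw [hν _ (Or.inl isOpen_Ioi), ENNReal.toReal_ofReal
        (hμ.nonneg _ (Or.inl (isOpen_Ioi.preimage a.continuous)))]
    have h4 : μ (a ⁻¹' Ioi 0) ≤ μ U := by
      refine qm_mono_oo hμ (isOpen_Ioi.preimage a.continuous) hU ?_
      intro x hx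
      refine hsupp (subset_tsupport _ ?_)
      exact ne_of_gt hx
    rw [hqg]
    calc ∫ t, g t ∂ν ≤ ∫ t, ind2 t ∂ν := h1
      _ = (ν (Ioi 0)).toReal := h2
      _ = μ (a ⁻¹' Ioi 0) := h3
      _ ≤ μ U := h4
end
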